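/- arXiv:1210.5683 — 8 statements merged into one kernel-verified Lean document; each statement's English description precedes it below -/
import Mathlib

section
/- Let r and k be even integers with 1 ≤ k ≤ r. Then every r-regular graph has a k-factor, i.e., a spanning subgraph in which every vertex has degree exactly k. -/
/-- The degree of `v` in the graph `F`. -/
noncomputable def ndeg {V : Type*} (F : SimpleGraph V) (v : V) : ℕ :=
  (F.neighborSet v).ncard

open SimpleGraph Walk Finset

namespace PetersenAux

variable {V : Type*} {H : SimpleGraph V}

/-- Out-neighbours of `x` along the darts of a walk. -/
def outS {u u' : V} (c : H.Walk u u') (x : V) : Set V :=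
  {y | ∃ d ∈ c.darts, d.toProd = (x, y)}

/-- In-neighbours of `x` along the darts of a walk. -/
def inS {u u' : V} (c : H.Walk u u') (x : V) : Set V :=
  {y | ∃ d ∈ c.darts, d.toProd = (y, x)}

section CycleFacts

variable {v : V} {c : H.Walk v v}

lemma tail_ne_nil (hc : c.IsCycle) : c.support.tail ≠ [] := by
  have h3 := hc.three_le_length
  intro h
  have h2 : c.support = [v] := by rw [c.support_eq_cons, h]
  have h1 := c.length_support
  rw [h2] at h1
  simp only [List.length_cons, List.length_nil] at h1
  omega

lemma getLast_tail_eq (hc : c.IsCycle) : c.support.tail.getLast (tail_ne_nil hc) = v := by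
  rw [List.getLast_tail]
  exact c.getLast_support

lemma tail_eq (hc : c.IsCycle) :
    c.support.tail = c.support.tail.dropLast ++ [v] := by
  conv_lhs => rw [← List.dropLast_append_getLast (tail_ne_nil hc), getLast_tail_eq hc]

lemma dropLast_support_eq (hc : c.IsCycle) :
    c.support.dropLast = v :: c.support.tail.dropLast := by
  have hs : c.support = (v :: c.support.tail.dropLast) ++ [v] := by
    conv_lhs => rw [c.support_eq_cons, tail_eq hc]
    simp
  conv_lhs => rw [hs]
  rw [List.dropLast_concat]

lemma not_mem_dropLast_tail (hc : c.IsCycle) : v ∉ c.support.tail.dropLast := by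
  have hnd : (c.support.tail.dropLast ++ [v]).Nodup := by
    rw [← tail_eq hc]; exact hc.support_nodup
  have := List.disjoint_of_nodup_append hnd
  intro hv
  exact this hv (by simp)

lemma snd_darts_nodup (hc : c.IsCycle) : (c.darts.map (·.snd)).Nodup := by
  rw [c.map_snd_darts]; exact hc.support_nodup

lemma fst_darts_nodup (hc : c.IsCycle) : (c.darts.map (·.fst)).Nodup := by
  rw [c.map_fst_darts, dropLast_support_eq hc, List.nodup_cons]
  exact ⟨not_mem_dropLast_tail hc,
    (List.dropLast_sublist _).nodup hc.support_nodup⟩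

lemma mem_support_iff_tail (hc : c.IsCycle) {x : V} :
    x ∈ c.support ↔ x ∈ c.support.tail := by
  constructor
  · intro hx
    rw [c.support_eq_cons] at hx
    rcases List.mem_cons.1 hx with rfl | hx
    · rw [tail_eq hc]; simp
    · exact hx
  · exact fun hx => c.support_eq_cons ▸ List.mem_cons_of_mem _ hx

lemma mem_support_iff_dropLast (hc : c.IsCycle) {x : V} :
    x ∈ c.support ↔ x ∈ c.support.dropLast := by
  rw [mem_support_iff_tail hc, dropLast_support_eq hc]
  conv_lhs => rw [tail_eq hc]
  simp [List.mem_append, or_comm]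

lemma inS_eq_empty (hc : c.IsCycle) {x : V} (hx : x ∉ c.support) : inS c x = ∅ := by
  ext y
  simp only [Set.mem_empty_iff_false, iff_false]
  rintro ⟨d, hd, hp⟩
  have h1 := c.dart_snd_mem_support_of_mem_darts hd
  have h2 : d.snd = x := by show d.toProd.2 = x; rw [hp]
  exact hx (h2 ▸ h1)

lemma outS_eq_empty (hc : c.IsCycle) {x : V} (hx : x ∉ c.support) : outS c x = ∅ := by
  ext y
  simp only [Set.mem_empty_iff_false, iff_false]
  rintro ⟨d, hd, hp⟩
  have h1 := c.dart_fst_mem_support_of_mem_darts hd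
  have h2 : d.fst = x := by show d.toProd.1 = x; rw [hp]
  exact hx (h2 ▸ h1)

lemma ncard_inS (hc : c.IsCycle) {x : V} (hx : x ∈ c.support) : (inS c x).ncard = 1 := by
  have hx' : x ∈ c.darts.map (·.snd) := by
    rw [c.map_snd_darts]; exact (mem_support_iff_tail hc).1 hx
  obtain ⟨d, hd, hds⟩ := List.mem_map.1 hx'
  have : inS c x = {d.toProd.1} := by
    ext y
    constructor
    · rintro ⟨d', hd', hp⟩
      have hdd : d' = d := List.inj_on_of_nodup_map (snd_darts_nodup hc) hd' hd
        (by show d'.toProd.2 = d.toProd.2; rw [hp, hds])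
      subst hdd
      rw [hp]; simp
    · rintro rfl
      exact ⟨d, hd, by rw [Prod.ext_iff]; exact ⟨rfl, hds⟩⟩
  rw [this, Set.ncard_singleton]

lemma ncard_outS (hc : c.IsCycle) {x : V} (hx : x ∈ c.support) : (outS c x).ncard = 1 := by
  have hx' : x ∈ c.darts.map (·.fst) := by
    rw [c.map_fst_darts]; exact (mem_support_iff_dropLast hc).1 hx
  obtain ⟨d, hd, hds⟩ := List.mem_map.1 hx'
  have : outS c x = {d.toProd.2} := by
    ext y
    constructor
    · rintro ⟨d', hd', hp⟩
      have hdd : d' = d := List.inj_on_of_nodup_map (fst_darts_nodup hc) hd' hd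
        (by show d'.toProd.1 = d.toProd.1; rw [hp, hds])
      subst hdd
      rw [hp]; simp
    · rintro rfl
      exact ⟨d, hd, by rw [Prod.ext_iff]; exact ⟨hds, rfl⟩⟩
  rw [this, Set.ncard_singleton]

lemma not_both_darts (hc : c.IsCycle) {a b : V}
    (h1 : ∃ d ∈ c.darts, d.toProd = (a, b)) (h2 : ∃ d ∈ c.darts, d.toProd = (b, a)) : False := by
  obtain ⟨d, hd, hdp⟩ := h1
  obtain ⟨d', hd', hdp'⟩ := h2
  have hnd : (c.darts.map Dart.edge).Nodup := hc.isCircuit.isTrail.edges_nodup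
  have : d = d' := List.inj_on_of_nodup_map hnd hd hd' (by
    rw [dart_edge_eq_mk'_iff.2 (Or.inl hdp), dart_edge_eq_mk'_iff.2 (Or.inr hdp')])
  subst this
  rw [hdp] at hdp'
  have := d.adj
  rw [hdp] at this
  simp only [Prod.mk.injEq] at hdp'
  exact this.ne (hdp'.1.symm ▸ rfl)

lemma disjoint_outS_inS (hc : c.IsCycle) (x : V) : Disjoint (outS c x) (inS c x) := by
  rw [Set.disjoint_left]
  rintro y hy hy'
  exact not_both_darts hc hy hy'

lemma mem_union_iff_edge (c : H.Walk v v) {x y : V} :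
    y ∈ outS c x ∪ inS c x ↔ s(x, y) ∈ c.edges := by
  constructor
  · rintro (⟨d, hd, hp⟩ | ⟨d, hd, hp⟩)
    · have : d.edge = s(x, y) := dart_edge_eq_mk'_iff.2 (Or.inl hp)
      rw [← this]
      exact List.mem_map_of_mem hd
    · have : d.edge = s(x, y) :=
        dart_edge_eq_mk'_iff.2 (Or.inr hp)
      rw [← this]
      exact List.mem_map_of_mem hd
  · intro he
    obtain ⟨d, hd, hde⟩ := List.mem_map.1 he
    have : d.toProd = (x, y) ∨ d.toProd = (y, x) := by
      have := hde
      rw [dart_edge_eq_mk'_iff] at this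
      rcases this with h | h
      · exact Or.inl h
      · exact Or.inr h
    rcases this with h | h
    · exact Or.inl ⟨d, hd, h⟩
    · exact Or.inr ⟨d, hd, h⟩

end CycleFacts

end PetersenAux

namespace PetersenAux

variable {V : Type*} {H : SimpleGraph V}

lemma edge_of_start {u w z : V} {p : H.Walk u w} (hp : p.IsPath) (hz : s(z, u) ∈ p.edges) :
    z = p.getVert 1 := by
  cases p with
  | nil => simp at hz
  | @cons _ b _ h' p' =>
    rw [Walk.edges_cons, List.mem_cons] at hz
    rcases hz with hz | hz
    · rw [Sym2.eq_iff] at hz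
      rcases hz with ⟨rfl, rfl⟩ | ⟨rfl, -⟩
      · simp [Walk.getVert_cons_succ]
      · simp [Walk.getVert_cons_succ]
    · exfalso
      have hu : u ∈ p'.support := p'.snd_mem_support_of_mem_edges hz
      exact (Walk.cons_isPath_iff _ _ |>.1 hp).2 hu

lemma exists_cycle [Fintype V] (heven : ∀ x, Even (ndeg H x)) {a b : V} (hab : H.Adj a b) :
    ∃ (w : V) (c : H.Walk w w), c.IsCycle := by
  classical
  by_contra hno
  push_neg at hno
  set S : Set ℕ := {n | ∃ (x y : V) (p : H.Walk x y), p.IsPath ∧ p.length = n} with hS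
  have h1 : 1 ∈ S := by
    refine ⟨a, b, Walk.cons hab Walk.nil, ?_, by simp⟩
    rw [Walk.cons_isPath_iff]
    simp [hab.ne]
  have hbdd : BddAbove S := by
    refine ⟨Fintype.card V, ?_⟩
    rintro m ⟨x, y, p, hp, rfl⟩
    exact hp.length_lt.le
  obtain ⟨x, y, p, hp, hlen⟩ := Nat.sSup_mem ⟨1, h1⟩ hbdd
  have hn1 : 1 ≤ sSup S := le_csSup hbdd h1
  have hplen : 1 ≤ p.length := by omega
  have hadj1 : H.Adj x (p.getVert 1) := by
    have := p.adj_getVert_succ (i := 0) (by omega)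
    simpa using this
  have hnbr : ∀ z, H.Adj x z → z ∈ p.support := by
    intro z hz
    by_contra hzs
    have hmem : p.length + 1 ∈ S :=
      ⟨z, y, Walk.cons hz.symm p, (Walk.cons_isPath_iff _ _).2 ⟨hp, hzs⟩, by simp⟩
    have := le_csSup hbdd hmem
    omega
  have h2 : 2 ≤ (H.neighborSet x).ncard := by
    obtain ⟨m, hm⟩ := heven x
    have hmm : ndeg H x = m + m := hm
    have hpos : 0 < (H.neighborSet x).ncard := by
      rw [(Set.ncard_pos (Set.toFinite _))]
      exact ⟨_, hadj1⟩
    have : ndeg H x = (H.neighborSet x).ncard := rfl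
    omega
  obtain ⟨z, hz, hzne⟩ := Set.exists_ne_of_one_lt_ncard (s := H.neighborSet x)
    (by omega) (p.getVert 1)
  have hzadj : H.Adj x z := hz
  have hzsup : z ∈ p.support := hnbr z hzadj
  set q := p.takeUntil z hzsup with hq'
  have hq : q.IsPath := hp.takeUntil hzsup
  have hnotedge : s(z, x) ∉ q.edges := by
    intro hmem
    have hmem' : s(z, x) ∈ p.edges := p.edges_takeUntil_subset hzsup hmem
    exact hzne (edge_of_start hp hmem')
  exact hno z (Walk.cons hzadj.symm q)
    ((Walk.cons_isCycle_iff q hzadj.symm).2 ⟨hq, hnotedge⟩)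

lemma trivial_orient (hE : H.edgeSet = ∅) :
    ∃ D : V → V → Prop, (∀ a b, D a b → H.Adj a b) ∧ (∀ a b, ¬(D a b ∧ D b a)) ∧
      (∀ a b, H.Adj a b → D a b ∨ D b a) ∧ (∀ x, {y | D x y}.ncard = {y | D y x}.ncard) := by
  refine ⟨fun _ _ => False, by simp, by simp, ?_, by simp⟩
  intro a b hab
  have : s(a, b) ∈ H.edgeSet := hab
  rw [hE] at this
  exact absurd this (Set.notMem_empty _)

lemma orient [Fintype V] : ∀ (n : ℕ) (H : SimpleGraph V), H.edgeSet.ncard ≤ n →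
    (∀ x, Even (ndeg H x)) →
    ∃ D : V → V → Prop, (∀ a b, D a b → H.Adj a b) ∧ (∀ a b, ¬(D a b ∧ D b a)) ∧
      (∀ a b, H.Adj a b → D a b ∨ D b a) ∧ (∀ x, {y | D x y}.ncard = {y | D y x}.ncard) := by
  intro n
  induction n with
  | zero =>
    intro H hcard _
    have hE : H.edgeSet = ∅ := (Set.ncard_eq_zero (Set.toFinite _)).1 (by omega)
    exact trivial_orient hE
  | succ n IH =>
    intro H hcard heven
    classical
    by_cases hE : H.edgeSet = ∅
    · exact trivial_orient hE
    · obtain ⟨e, he⟩ := Set.nonempty_iff_ne_empty.2 hE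
      have hadj : ∃ a b, H.Adj a b := by
        induction e using Sym2.ind with
        | _ a b => exact ⟨a, b, (H.mem_edgeSet).1 he⟩
      obtain ⟨a, b, hab⟩ := hadj
      obtain ⟨w, c, hc⟩ := exists_cycle heven hab
      set Hd := H.deleteEdges {e | e ∈ c.edges} with hHd
      have hHdAdj : ∀ p q, Hd.Adj p q ↔ H.Adj p q ∧ s(p, q) ∉ c.edges := by
        intro p q; rw [hHd, SimpleGraph.deleteEdges_adj]; rfl
      have hsub : ∀ x, (outS c x ∪ inS c x) ⊆ H.neighborSet x := by
        intro x y hy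
        rw [mem_union_iff_edge] at hy
        exact (H.mem_edgeSet).1 (c.edges_subset_edgeSet hy)
      have hnbr : ∀ x, Hd.neighborSet x = H.neighborSet x \ (outS c x ∪ inS c x) := by
        intro x
        ext y
        simp only [SimpleGraph.mem_neighborSet, Set.mem_diff, hHdAdj, mem_union_iff_edge c]
      have hcyccard : ∀ x, (outS c x ∪ inS c x).ncard = 1 * (outS c x).ncard +
          1 * (inS c x).ncard := by
        intro x
        rw [Set.ncard_union_eq (disjoint_outS_inS hc x) (Set.toFinite _) (Set.toFinite _)]
        ring
      have hcycEven : ∀ x, Even ((outS c x ∪ inS c x)).ncard := by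
        intro x
        rw [hcyccard x]
        by_cases hx : x ∈ c.support
        · rw [ncard_outS hc hx, ncard_inS hc hx]; decide
        · rw [outS_eq_empty hc hx, inS_eq_empty hc hx]; simp
      have hdeg : ∀ x, ndeg Hd x = ndeg H x - (outS c x ∪ inS c x).ncard := by
        intro x
        show (Hd.neighborSet x).ncard = _
        rw [hnbr x, Set.ncard_diff (hsub x)]
        rfl
      have hevenHd : ∀ x, Even (ndeg Hd x) := by
        intro x
        have hle : (outS c x ∪ inS c x).ncard ≤ ndeg H x :=
          Set.ncard_le_ncard (hsub x) (Set.toFinite _)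
        rw [hdeg x, Nat.even_sub hle]
        exact iff_of_true (heven x) (hcycEven x)
      have hedges : Hd.edgeSet = H.edgeSet \ {e | e ∈ c.edges} := by
        rw [hHd, SimpleGraph.edgeSet_deleteEdges]
      have hce : c.edges ≠ [] := by
        have h3 := hc.three_le_length
        have := c.length_edges
        intro h
        rw [h] at this
        simp at this
        omega
      have he0 : c.edges.head hce ∈ c.edges := List.head_mem hce
      have he0H : c.edges.head hce ∈ H.edgeSet := c.edges_subset_edgeSet he0
      have hlt : Hd.edgeSet.ncard < H.edgeSet.ncard := by
        rw [hedges]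
        refine Set.ncard_lt_ncard ?_ (Set.toFinite _)
        refine ssubset_of_subset_not_subset Set.diff_subset ?_
        intro hsup
        exact (hsup he0H).2 he0
      obtain ⟨D', h1', h2', h3', h4'⟩ := IH Hd (by omega) hevenHd
      have hD'notc : ∀ p q, D' p q → s(p, q) ∉ c.edges := by
        intro p q hpq
        exact ((hHdAdj p q).1 (h1' p q hpq)).2
      refine ⟨fun p q => D' p q ∨ ∃ d ∈ c.darts, d.toProd = (p, q), ?_, ?_, ?_, ?_⟩
      · rintro p q (h | ⟨d, hd, hdp⟩)
        · exact (hHdAdj p q).1 (h1' p q h) |>.1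
        · have := d.adj
          rwa [show d.toProd.1 = p by rw [hdp], show d.toProd.2 = q by rw [hdp]] at this
      · rintro p q ⟨(h1 | h1), (h2 | h2)⟩
        · exact h2' p q ⟨h1, h2⟩
        · refine hD'notc p q h1 ?_
          have : p ∈ outS c q ∪ inS c q := Or.inl (show p ∈ outS c q from h2)
          rw [mem_union_iff_edge] at this
          rwa [Sym2.eq_swap] at this
        · refine hD'notc q p h2 ?_
          have : q ∈ outS c p ∪ inS c p := Or.inl (show q ∈ outS c p from h1)
          rw [mem_union_iff_edge] at this
          rwa [Sym2.eq_swap] at this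
        · exact not_both_darts hc h1 h2
      · intro p q hpq
        by_cases hedge : s(p, q) ∈ c.edges
        · have : q ∈ outS c p ∪ inS c p := (mem_union_iff_edge c).2 hedge
          rcases this with h | h
          · exact Or.inl (Or.inr h)
          · exact Or.inr (Or.inr h)
        · rcases h3' p q ((hHdAdj p q).2 ⟨hpq, hedge⟩) with h | h
          · exact Or.inl (Or.inl h)
          · exact Or.inr (Or.inl h)
      · intro x
        have hout : {y | D' x y ∨ ∃ d ∈ c.darts, d.toProd = (x, y)} =
            {y | D' x y} ∪ outS c x := Set.ext fun y => Iff.rfl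
        have hin : {y | D' y x ∨ ∃ d ∈ c.darts, d.toProd = (y, x)} =
            {y | D' y x} ∪ inS c x := Set.ext fun y => Iff.rfl
        rw [hout, hin]
        have hdis1 : Disjoint {y | D' x y} (outS c x) := by
          rw [Set.disjoint_left]
          rintro y hy hy'
          exact hD'notc x y hy ((mem_union_iff_edge c).1 (Or.inl hy'))
        have hdis2 : Disjoint {y | D' y x} (inS c x) := by
          rw [Set.disjoint_left]
          rintro y hy hy'
          refine hD'notc y x hy ?_
          exact (mem_union_iff_edge c).1 (Or.inl (show x ∈ outS c y from hy'))
        rw [Set.ncard_union_eq hdis1 (Set.toFinite _) (Set.toFinite _),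
          Set.ncard_union_eq hdis2 (Set.toFinite _) (Set.toFinite _), h4' x]
        congr 1
        by_cases hx : x ∈ c.support
        · rw [ncard_outS hc hx, ncard_inS hc hx]
        · rw [outS_eq_empty hc hx, inS_eq_empty hc hx]

end PetersenAux

namespace PetersenAux

variable {V : Type*}

lemma hall_regular [Fintype V] [DecidableEq V] (d : ℕ) (hd : 0 < d) (t : V → Finset V)
    (hout : ∀ v, (t v).card = d)
    (hin : ∀ w, (Finset.univ.filter fun v => w ∈ t v).card = d) :
    ∃ f : V → V, Function.Injective f ∧ ∀ v, f v ∈ t v := by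
  rw [← Finset.all_card_le_biUnion_card_iff_exists_injective]
  intro s
  have h1 : ∑ v ∈ s, (t v).card = ∑ w ∈ Finset.univ, (s.filter fun v => w ∈ t v).card := by
    calc ∑ v ∈ s, (t v).card
        = ∑ v ∈ s, ∑ w ∈ Finset.univ, (if w ∈ t v then 1 else 0) := by
          refine Finset.sum_congr rfl fun v _ => ?_
          rw [Finset.sum_boole]
          simp [Finset.filter_mem_eq_inter]
      _ = ∑ w ∈ Finset.univ, ∑ v ∈ s, (if w ∈ t v then 1 else 0) := Finset.sum_comm
      _ = ∑ w ∈ Finset.univ, (s.filter fun v => w ∈ t v).card := by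
          refine Finset.sum_congr rfl fun w _ => ?_
          rw [Finset.sum_boole]
          simp
  have h2 : ∑ w ∈ Finset.univ, (s.filter fun v => w ∈ t v).card
      = ∑ w ∈ s.biUnion t, (s.filter fun v => w ∈ t v).card := by
    refine (Finset.sum_subset (Finset.subset_univ _) ?_).symm
    intro w _ hw
    rw [Finset.card_eq_zero, Finset.filter_eq_empty_iff]
    intro v hv hmem
    exact hw (Finset.mem_biUnion.2 ⟨v, hv, hmem⟩)
  have h3 : ∑ w ∈ s.biUnion t, (s.filter fun v => w ∈ t v).card
      ≤ (s.biUnion t).card * d := by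
    have := Finset.sum_le_card_nsmul (s.biUnion t) (fun w => (s.filter fun v => w ∈ t v).card) d
      (fun w _ => by
        calc (s.filter fun v => w ∈ t v).card
            ≤ (Finset.univ.filter fun v => w ∈ t v).card :=
              Finset.card_le_card (Finset.filter_subset_filter _ (Finset.subset_univ s))
          _ = d := hin w)
    simpa [smul_eq_mul] using this
  have h4 : ∑ v ∈ s, (t v).card = s.card * d :=
    Finset.sum_const_nat fun v _ => hout v
  have : s.card * d ≤ (s.biUnion t).card * d := by omega
  rcases Nat.eq_zero_or_pos d with rfl | hd'
  · omega
  · exact Nat.le_of_mul_le_mul_right this hd'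

lemma sub_regular [Fintype V] [DecidableEq V] :
    ∀ (m d : ℕ) (t : V → Finset V), m ≤ d → (∀ v, (t v).card = d) →
    (∀ w, (Finset.univ.filter fun v => w ∈ t v).card = d) →
    ∃ t' : V → Finset V, (∀ v, t' v ⊆ t v) ∧ (∀ v, (t' v).card = m) ∧
      (∀ w, (Finset.univ.filter fun v => w ∈ t' v).card = m) := by
  intro m
  induction m with
  | zero =>
    intro d t _ _ _
    exact ⟨fun _ => ∅, by simp, by simp, by simp⟩
  | succ m IH =>
    intro d t hmd hout hin
    obtain ⟨f, hfinj, hf⟩ := hall_regular d (by omega) t hout hin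
    have hfsurj : Function.Surjective f := Finite.surjective_of_injective hfinj
    have hout₂ : ∀ v, ((t v).erase (f v)).card = d - 1 := fun v => by
      rw [Finset.card_erase_of_mem (hf v), hout v]
    have hin₂ : ∀ w, (Finset.univ.filter fun v => w ∈ (t v).erase (f v)).card = d - 1 := by
      intro w
      obtain ⟨v₀, rfl⟩ := hfsurj w
      have hfe : (Finset.univ.filter fun v => f v₀ ∈ (t v).erase (f v)) =
          (Finset.univ.filter fun v => f v₀ ∈ t v).erase v₀ := by
        ext v
        simp only [Finset.mem_filter, Finset.mem_erase, Finset.mem_univ, true_and]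
        constructor
        · rintro ⟨hne, hmem⟩
          exact ⟨fun h => hne (by rw [h]), hmem⟩
        · rintro ⟨hne, hmem⟩
          exact ⟨fun h => hne (hfinj h).symm, hmem⟩
      rw [hfe, Finset.card_erase_of_mem (by simp [hf v₀]), hin _]
    obtain ⟨t₃, hsub₃, hout₃, hin₃⟩ := IH (d - 1) (fun v => (t v).erase (f v))
      (by omega) hout₂ hin₂
    refine ⟨fun v => insert (f v) (t₃ v), ?_, ?_, ?_⟩
    · intro v x hx
      rcases Finset.mem_insert.1 hx with rfl | hx
      · exact hf v
      · exact Finset.erase_subset _ _ (hsub₃ v hx)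
    · intro v
      rw [Finset.card_insert_of_notMem (fun h => Finset.notMem_erase _ _ (hsub₃ v h)),
        hout₃ v]
    · intro w
      obtain ⟨v₀, rfl⟩ := hfsurj w
      have hfe : (Finset.univ.filter fun v => f v₀ ∈ insert (f v) (t₃ v)) =
          insert v₀ (Finset.univ.filter fun v => f v₀ ∈ t₃ v) := by
        ext v
        simp only [Finset.mem_filter, Finset.mem_insert, Finset.mem_univ, true_and]
        constructor
        · rintro (heq | hmem)
          · exact Or.inl (hfinj heq.symm)
          · exact Or.inr hmem
        · rintro (rfl | hmem)
          · exact Or.inl rfl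
          · exact Or.inr hmem
      rw [hfe, Finset.card_insert_of_notMem, hin₃ _]
      intro hmem
      rw [Finset.mem_filter] at hmem
      exact Finset.notMem_erase (f v₀) (t v₀) (hsub₃ v₀ hmem.2)

end PetersenAux

/-- **Petersen's theorem.** If `r` and `k` are even with `1 ≤ k ≤ r`, then every
`r`-regular graph has a `k`-factor. -/
theorem petersen_even_factor {r k : ℕ} (hr : Even r) (hk : Even k)
    (hk1 : 1 ≤ k) (hkr : k ≤ r) {V : Type*} [Fintype V]
    (G : SimpleGraph V) (hreg : ∀ v, ndeg G v = r) :
    ∃ F ≤ G, ∀ v, ndeg F v = k := by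
  classical
  obtain ⟨m, hm⟩ := hk
  obtain ⟨sh, hsh⟩ := id hr
  have heven : ∀ x, Even (ndeg G x) := fun x => by rw [hreg x]; exact hr
  obtain ⟨D, hD1, hD2, hD3, hD4⟩ := PetersenAux.orient G.edgeSet.ncard G le_rfl heven
  have hsplit : ∀ x, {y | D x y} ∪ {y | D y x} = G.neighborSet x := by
    intro x; ext y
    simp only [Set.mem_union, Set.mem_setOf_eq, SimpleGraph.mem_neighborSet]
    constructor
    · rintro (h | h)
      exacts [hD1 x y h, (hD1 y x h).symm]
    · exact hD3 x y
  have hdisj : ∀ x, Disjoint {y | D x y} {y | D y x} := by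
    intro x; rw [Set.disjoint_left]
    intro y hy hy'
    exact hD2 x y ⟨hy, hy'⟩
  have houtcard : ∀ x, {y | D x y}.ncard = sh := by
    intro x
    have h0 := congrArg Set.ncard (hsplit x)
    rw [Set.ncard_union_eq (hdisj x) (Set.toFinite _) (Set.toFinite _), ← hD4 x] at h0
    have h2 : (G.neighborSet x).ncard = r := hreg x
    omega
  have hincard : ∀ w, {y | D y w}.ncard = sh := fun w => by rw [← hD4 w, houtcard w]
  set t : V → Finset V := fun x => (Set.toFinite {y | D x y}).toFinset with ht
  have htmem : ∀ x y, y ∈ t x ↔ D x y := fun x y => Set.Finite.mem_toFinset _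
  have hout : ∀ x, (t x).card = sh := by
    intro x
    rw [ht]
    rw [← Set.ncard_eq_toFinset_card _ (Set.toFinite {y | D x y}), houtcard x]
  have hin : ∀ w, (Finset.univ.filter fun v => w ∈ t v).card = sh := by
    intro w
    have heq : (Finset.univ.filter fun v => w ∈ t v) = (Set.toFinite {v | D v w}).toFinset := by
      ext v
      simp [htmem, Set.Finite.mem_toFinset]
    rw [heq, ← Set.ncard_eq_toFinset_card _ (Set.toFinite {v | D v w}), hincard w]
  have hmsh : m ≤ sh := by omega
  obtain ⟨t', hsub', hout', hin'⟩ := PetersenAux.sub_regular m sh t hmsh hout hin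
  have ht'D : ∀ x y, y ∈ t' x → D x y := fun x y h => (htmem x y).1 (hsub' x h)
  refine ⟨SimpleGraph.fromRel (fun x y => y ∈ t' x), ?_, ?_⟩
  · intro x y hxy
    rw [SimpleGraph.fromRel_adj] at hxy
    rcases hxy.2 with h | h
    · exact hD1 x y (ht'D x y h)
    · exact (hD1 y x (ht'D y x h)).symm
  · intro x
    have hnb : (SimpleGraph.fromRel fun a b => b ∈ t' a).neighborSet x =
        ↑(t' x) ∪ ↑(Finset.univ.filter fun w => x ∈ t' w) := by
      ext y
      simp only [SimpleGraph.mem_neighborSet, SimpleGraph.fromRel_adj, Set.mem_union,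
        Finset.coe_filter, Set.mem_setOf_eq, Finset.mem_coe, Finset.mem_univ, true_and]
      constructor
      · rintro ⟨hne, h | h⟩
        exacts [Or.inl h, Or.inr h]
      · intro h
        constructor
        · rcases h with h | h
          · exact (hD1 x y (ht'D x y h)).ne
          · exact (hD1 y x (ht'D y x h)).ne.symm
        · exact h.imp id id
    have hdisj2 : Disjoint (↑(t' x) : Set V)
        (↑(Finset.univ.filter fun w => x ∈ t' w) : Set V) := by
      rw [Set.disjoint_left]
      intro y hy hy'
      rw [Finset.mem_coe] at hy
      have hy2 : x ∈ t' y := by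
        have := hy'
        rw [Finset.mem_coe, Finset.mem_filter] at this
        exact this.2
      exact hD2 x y ⟨ht'D x y hy, ht'D y x hy2⟩
    show ((SimpleGraph.fromRel fun a b => b ∈ t' a).neighborSet x).ncard = k
    rw [hnb, Set.ncard_union_eq hdisj2 (Set.toFinite _) (Set.toFinite _),
      Set.ncard_coe_finset, Set.ncard_coe_finset, hout' x, hin' x]
    omega
end

section
/- Let 1 ≤ k ≤ r-1. Then every r-regular graph has a {k, k+1}-factor, i.e., a spanning subgraph in which every vertex has degree k or k+1. -/
lemma step_lemma {V : Type*} [Fintype V] (H : SimpleGraph V) (j : ℕ)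
    (hH : ∀ v, ndeg H v = j + 1 ∨ ndeg H v = j + 2) :
    ∃ F ≤ H, ∀ v, ndeg F v = j ∨ ndeg F v = j + 1 := by
  classical
  set A : Set V := {v | ndeg H v = j + 2} with hA
  set t : A → Finset V := fun a => (H.neighborSet ↑a).toFinset with ht
  have hndegH : ∀ w, (H.neighborSet w).toFinset.card = ndeg H w := fun w =>
    (Set.ncard_eq_toFinset_card' _).symm
  have hcard_t : ∀ a : A, (t a).card = j + 2 := fun a => by
    rw [ht]; rw [hndegH]; exact a.2
  have hall : ∀ s : Finset A, s.card ≤ (s.biUnion t).card := by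
    intro s
    set U := s.biUnion t with hU
    have hsub : ∀ a ∈ s, t a ⊆ U := fun a ha => Finset.subset_biUnion_of_mem t ha
    have h1 : (j + 2) * s.card = ∑ a ∈ s, (t a).card := by
      rw [Finset.sum_congr rfl fun a _ => hcard_t a, Finset.sum_const, smul_eq_mul, mul_comm]
    have h2 : ∑ a ∈ s, (t a).card = ∑ w ∈ U, (s.filter fun a => w ∈ t a).card := by
      have key : ∀ a ∈ s, (t a).card = ∑ w ∈ U, (if w ∈ t a then 1 else 0) := by
        intro a ha
        rw [← Finset.card_filter, Finset.filter_mem_eq_inter,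
          Finset.inter_eq_right.mpr (hsub a ha)]
      rw [Finset.sum_congr rfl key, Finset.sum_comm]
      exact Finset.sum_congr rfl fun w _ => (Finset.card_filter _ _).symm
    have h3 : ∀ w, (s.filter fun a => w ∈ t a).card ≤ j + 2 := by
      intro w
      have hinj : (s.filter fun a => w ∈ t a).card ≤ (H.neighborSet w).toFinset.card := by
        refine Finset.card_le_card_of_injOn (fun a => (a : V)) ?_ ?_
        · intro a ha
          have ha' := (Finset.mem_filter.mp (Finset.mem_coe.mp ha)).2
          simp only [ht, Set.mem_toFinset, SimpleGraph.mem_neighborSet] at ha' ⊢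
          simpa using ha'.symm
        · exact fun a _ b _ hab => Subtype.ext hab
      rw [hndegH] at hinj
      rcases hH w with h | h <;> omega
    have hmain : (j + 2) * s.card ≤ (j + 2) * U.card := by
      rw [h1, h2]
      calc ∑ w ∈ U, (s.filter fun a => w ∈ t a).card ≤ ∑ w ∈ U, (j + 2) :=
            Finset.sum_le_sum fun w _ => h3 w
        _ = (j + 2) * U.card := by rw [Finset.sum_const, smul_eq_mul, mul_comm]
    exact Nat.le_of_mul_le_mul_left hmain (by omega)
  obtain ⟨f, hfinj, hft⟩ := (Finset.all_card_le_biUnion_card_iff_exists_injective t).mp hall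
  have hfadj : ∀ a : A, H.Adj ↑a (f a) := by
    intro a
    have := hft a
    rw [ht, Set.mem_toFinset, SimpleGraph.mem_neighborSet] at this
    exact this
  -- the set of "deleted" partners at v
  set dadj : V → V → Prop :=
    fun x y => (∃ hx : x ∈ A, f ⟨x, hx⟩ = y) ∨ (∃ hy : y ∈ A, f ⟨y, hy⟩ = x) with hdadj
  have dsymm : ∀ x y, dadj x y → dadj y x := fun x y h => h.symm
  set F : SimpleGraph V :=
    { Adj := fun x y => H.Adj x y ∧ ¬ dadj x y
      symm := ⟨fun x y h => ⟨h.1.symm, fun hd => h.2 (dsymm _ _ hd)⟩⟩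
      loopless := ⟨fun x h => H.loopless.irrefl x h.1⟩ } with hF
  refine ⟨F, fun x y h => h.1, ?_⟩
  intro v
  set Dv : Set V := {w | dadj v w} with hDv
  have hsubD : Dv ⊆ H.neighborSet v := by
    intro w hw
    rcases hw with ⟨hv, hfv⟩ | ⟨hw', hfw⟩
    · rw [SimpleGraph.mem_neighborSet, ← hfv]; exact hfadj ⟨v, hv⟩
    · rw [SimpleGraph.mem_neighborSet]
      have := hfadj ⟨w, hw'⟩
      rw [hfw] at this
      exact this.symm
  have hNF : F.neighborSet v = H.neighborSet v \ Dv := by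
    ext w
    simp only [SimpleGraph.mem_neighborSet, hF, Set.mem_diff, hDv, Set.mem_setOf_eq]
  have hdiff : ndeg F v = ndeg H v - Dv.ncard := by
    rw [ndeg, hNF, Set.ncard_diff hsubD]
    rfl
  -- bound the size of Dv
  set S2 : Set V := {w | ∃ hw : w ∈ A, f ⟨w, hw⟩ = v} with hS2
  have hS2sub : S2.Subsingleton := by
    intro x hx y hy
    obtain ⟨hx', hfx⟩ := hx
    obtain ⟨hy', hfy⟩ := hy
    have : f ⟨x, hx'⟩ = f ⟨y, hy'⟩ := by rw [hfx, hfy]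
    exact congrArg Subtype.val (hfinj this)
  have hS2card : S2.ncard ≤ 1 := by
    rcases hS2sub.eq_empty_or_singleton with h | ⟨x, h⟩ <;> simp [h]
  by_cases hv : v ∈ A
  · have hDeq : Dv = {f ⟨v, hv⟩} ∪ S2 := by
      ext w
      simp only [hDv, Set.mem_setOf_eq, Set.mem_union, Set.mem_singleton_iff, hS2]
      constructor
      · rintro (⟨hv', hfv⟩ | h)
        · left; rw [← hfv]
        · right; exact h
      · rintro (h | h)
        · left; exact ⟨hv, h.symm⟩
        · right; exact h
    have hub : Dv.ncard ≤ 2 := by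
      rw [hDeq]
      calc ({f ⟨v, hv⟩} ∪ S2 : Set V).ncard ≤ ({f ⟨v, hv⟩} : Set V).ncard + S2.ncard :=
            Set.ncard_union_le _ _
        _ ≤ 1 + 1 := by rw [Set.ncard_singleton]; omega
        _ = 2 := rfl
    have hlb : 1 ≤ Dv.ncard := by
      have hne : Dv.Nonempty := ⟨f ⟨v, hv⟩, Or.inl ⟨hv, rfl⟩⟩
      exact (Set.ncard_pos (Set.toFinite _)).mpr hne
    have hdH : ndeg H v = j + 2 := hv
    rw [hdiff, hdH]
    omega
  · have hDeq : Dv ⊆ S2 := by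
      intro w hw
      rcases hw with ⟨hv', _⟩ | h
      · exact absurd hv' hv
      · exact h
    have hub : Dv.ncard ≤ 1 :=
      le_trans (Set.ncard_le_ncard hDeq (Set.toFinite _)) hS2card
    have hdH : ndeg H v = j + 1 := (hH v).resolve_right hv
    rw [hdiff, hdH]
    omega


/-- **Tutte's theorem.** If `1 ≤ k ≤ r - 1`, then every `r`-regular graph has a
`{k, k+1}`-factor. -/
theorem tutte_k_k1_factor {r k : ℕ} (hk1 : 1 ≤ k) (hkr : k ≤ r - 1)
    {V : Type*} [Fintype V]
    (G : SimpleGraph V) (hreg : ∀ v, ndeg G v = r) :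
    ∃ F ≤ G, ∀ v, ndeg F v = k ∨ ndeg F v = k + 1 := by
  classical
  have key : ∀ t : ℕ, t ≤ r → ∃ F ≤ G, ∀ v, ndeg F v = r - t ∨ ndeg F v = (r - t) + 1 := by
    intro t
    induction t with
    | zero => exact fun _ => ⟨G, le_refl G, fun v => Or.inl (by simpa using hreg v)⟩
    | succ n ih =>
      intro h
      obtain ⟨F, hFG, hFd⟩ := ih (by omega)
      have hre : r - n = (r - (n + 1)) + 1 := by omega
      have hFd' : ∀ v, ndeg F v = (r - (n+1)) + 1 ∨ ndeg F v = (r - (n+1)) + 2 := by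
        intro v
        rcases hFd v with h' | h' <;> [left; right] <;> omega
      obtain ⟨F', hF'F, hF'd⟩ := step_lemma F (r - (n + 1)) hFd'
      exact ⟨F', le_trans hF'F hFG, hF'd⟩
  obtain ⟨F, hFG, hFd⟩ := key (r - k) (by omega)
  have : r - (r - k) = k := by omega
  rw [this] at hFd
  exact ⟨F, hFG, hFd⟩
end

section
/- Let G be a graph with a set function H : V(G) → 2^ℕ satisfying H(v) ⊆ {0, 1, ..., d_G(v)}. If |H(v)| > ⌈d_G(v)/2⌉ for all vertices v, then G has an H-factor. -/
open Finset

lemma ndeg_eq {V : Type*} [Fintype V] [DecidableEq V] (F : SimpleGraph V)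
    [DecidableRel F.Adj] (v : V) :
    ndeg F v = ({e ∈ F.edgeFinset | v ∈ e}).card := by
  have h1 : ndeg F v = F.degree v := by
    simp [ndeg, SimpleGraph.degree, SimpleGraph.neighborFinset, Set.ncard_eq_toFinset_card']
  rw [h1, ← SimpleGraph.card_incidenceFinset_eq_degree]
  congr 1
  ext e
  simp [SimpleGraph.mem_incidenceFinset, SimpleGraph.incidenceSet, SimpleGraph.mem_edgeFinset]


section Core

variable {E : Type*} [DecidableEq E] {ι : Type*} [Fintype ι] [DecidableEq ι]

/-- Auxiliary sign lemma. -/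
lemma neg_one_pow_sub {a b : ℕ} (h : b ≤ a) : (-1 : ℤ) ^ (a - b) = (-1) ^ a * (-1) ^ b := by
  have h2 : (-1 : ℤ) ^ (a - b) * ((-1) ^ b * (-1) ^ b) = (-1) ^ a * (-1) ^ b := by
    rw [← mul_assoc, ← pow_add, Nat.sub_add_cancel h]
  rw [← h2, ← pow_add]
  have : Even (b + b) := ⟨b, rfl⟩
  rw [this.neg_one_pow, mul_one]

/-- Alternating sum of the indicator of `A ⊆ T` over `T ⊆ S` is the indicator of `A = S`. -/
lemma alt_sum_indicator (S A : Finset E) (hA : A ⊆ S) :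
    ∑ T ∈ S.powerset, (-1 : ℤ) ^ (S.card - T.card) * (if A ⊆ T then 1 else 0)
      = if A = S then 1 else 0 := by
  classical
  set D : Finset E := S \ A with hD
  have hDS : D ⊆ S := Finset.sdiff_subset
  have step1 : ∑ T ∈ S.powerset, (-1 : ℤ) ^ (S.card - T.card) * (if A ⊆ T then 1 else 0)
      = ∑ U ∈ S.powerset, (-1 : ℤ) ^ U.card * (if U ⊆ D then 1 else 0) := by
    refine Finset.sum_nbij' (fun T => S \ T) (fun U => S \ U) ?_ ?_ ?_ ?_ ?_
    · intro T hT
      exact Finset.mem_powerset.mpr Finset.sdiff_subset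
    · intro U hU
      exact Finset.mem_powerset.mpr Finset.sdiff_subset
    · intro T hT
      exact Finset.sdiff_sdiff_eq_self (Finset.mem_powerset.mp hT)
    · intro U hU
      exact Finset.sdiff_sdiff_eq_self (Finset.mem_powerset.mp hU)
    · intro T hT
      have hTS := Finset.mem_powerset.mp hT
      have hcard : (S \ T).card = S.card - T.card := Finset.card_sdiff_of_subset hTS
      have hiff : A ⊆ T ↔ S \ T ⊆ D := by
        constructor
        · intro h
          exact Finset.sdiff_subset_sdiff (le_refl _) h
        · intro h x hx
          by_contra hxT
          have hxS : x ∈ S := hA hx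
          have : x ∈ S \ T := Finset.mem_sdiff.mpr ⟨hxS, hxT⟩
          have : x ∈ D := h this
          rw [hD, Finset.mem_sdiff] at this
          exact this.2 hx
      rw [hcard]
      congr 1
      simp only [hiff]
  rw [step1]
  have step2 : ∑ U ∈ S.powerset, (-1 : ℤ) ^ U.card * (if U ⊆ D then 1 else 0)
      = ∑ U ∈ D.powerset, (-1 : ℤ) ^ U.card := by
    simp only [mul_ite, mul_one, mul_zero]
    rw [← Finset.sum_filter]
    congr 1
    ext U
    simp only [Finset.mem_filter, Finset.mem_powerset]
    exact ⟨fun h => h.2, fun h => ⟨h.trans hDS, h⟩⟩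
  rw [step2, Finset.sum_powerset_neg_one_pow_card]
  have : D = ∅ ↔ A = S := by
    rw [hD, Finset.sdiff_eq_empty_iff_subset]
    exact ⟨fun h => le_antisymm hA h, fun h => h ▸ le_refl _⟩
  simp only [this]

end Core

section Core2

variable {E : Type*} [DecidableEq E] {ι : Type*} [Fintype ι] [DecidableEq ι]

lemma core (S : Finset E) (inc : ι → E → Prop) [∀ i, DecidablePred (inc i)] (k : ι → ℕ)
    (hcardS : S.card = Fintype.card ι)
    (f : ι → E) (hinj : Function.Injective f) (hfS : ∀ i, f i ∈ S) (hfinc : ∀ i, inc i (f i)) :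
    ∃ T ∈ S.powerset, ∏ i : ι, ((({e ∈ T | inc i e}).card : ℤ) - k i) ≠ 0 := by
  classical
  by_contra hcon
  push_neg at hcon
  -- the alternating sum is zero
  have hzero : ∑ T ∈ S.powerset,
      (-1 : ℤ) ^ (S.card - T.card) * ∏ i : ι, ((({e ∈ T | inc i e}).card : ℤ) - k i) = 0 :=
    Finset.sum_eq_zero fun T hT => by rw [hcon T hT, mul_zero]
  -- option-valued choices
  set Opt : ι → Finset (Option E) :=
    fun i => insert none (({e ∈ S | inc i e}).map ⟨some, Option.some_injective E⟩) with hOpt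
  set term : Finset E → ι → Option E → ℤ :=
    fun T i o => o.elim (-(k i : ℤ)) (fun e => if e ∈ T then 1 else 0) with hterm
  set Ec : (ι → Option E) → Finset E :=
    fun χ => Finset.univ.biUnion (fun i => (χ i).toFinset) with hEc
  set C : (ι → Option E) → ℤ :=
    fun χ => ∏ i : ι, ((χ i).elim (-(k i : ℤ)) (fun _ => 1)) with hC
  -- each factor expands as a sum over options
  have hfactor : ∀ T, T ⊆ S → ∀ i : ι, ((({e ∈ T | inc i e}).card : ℤ) - k i)
      = ∑ o ∈ Opt i, term T i o := by
    intro T hT i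
    rw [hOpt, Finset.sum_insert (by simp), Finset.sum_map]
    simp only [hterm, Option.elim, Function.Embedding.coeFn_mk]
    have h1 : ∑ e ∈ {e ∈ S | inc i e}, (if e ∈ T then (1 : ℤ) else 0)
        = ({e ∈ T | inc i e}).card := by
      rw [Finset.sum_boole]
      have : {e ∈ {e ∈ S | inc i e} | e ∈ T} = {e ∈ T | inc i e} := by
        ext e
        simp only [Finset.mem_filter]
        exact ⟨fun h => ⟨h.2, h.1.2⟩, fun h => ⟨⟨hT h.1, h.2⟩, h.1⟩⟩
      rw [this]
    rw [h1]
    ring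
  -- expand the product
  have hPsum : ∀ T, T ⊆ S → ∏ i : ι, ((({e ∈ T | inc i e}).card : ℤ) - k i)
      = ∑ χ ∈ Fintype.piFinset Opt, ∏ i : ι, term T i (χ i) := by
    intro T hT
    rw [Finset.prod_congr rfl fun i _ => hfactor T hT i]
    exact Finset.prod_univ_sum _ _
  -- membership facts about Ec
  have hEcS : ∀ χ ∈ Fintype.piFinset Opt, Ec χ ⊆ S := by
    intro χ hχ e he
    rw [hEc, Finset.mem_biUnion] at he
    obtain ⟨i, _, he⟩ := he
    rw [Option.mem_toFinset] at he
    have hi := Fintype.mem_piFinset.mp hχ i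
    rw [hOpt, Finset.mem_insert] at hi
    rcases hi with h | h
    · rw [h] at he; simp at he
    · rw [Finset.mem_map] at h
      obtain ⟨e', he', heq⟩ := h
      simp only [Function.Embedding.coeFn_mk] at heq
      rw [← heq] at he
      rw [Option.mem_def, Option.some.injEq] at he
      subst he
      exact (Finset.mem_filter.mp he').1
  -- split product into indicator and constant parts
  have hsplit : ∀ T, ∀ χ, ∏ i : ι, term T i (χ i)
      = (if Ec χ ⊆ T then 1 else 0) * C χ := by
    intro T χ
    by_cases hsub : Ec χ ⊆ T
    · rw [if_pos hsub, one_mul, hC]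
      refine Finset.prod_congr rfl fun i _ => ?_
      cases hoi : χ i with
      | none => simp [hterm]
      | some e =>
        have heE : e ∈ Ec χ := by
          rw [hEc, Finset.mem_biUnion]
          exact ⟨i, Finset.mem_univ i, by rw [hoi]; simp⟩
        simp [hterm, hsub heE]
    · rw [if_neg hsub, zero_mul]
      obtain ⟨e, heE, heT⟩ := Finset.not_subset.mp hsub
      rw [hEc, Finset.mem_biUnion] at heE
      obtain ⟨i, _, he⟩ := heE
      rw [Option.mem_toFinset] at he
      refine Finset.prod_eq_zero (Finset.mem_univ i) ?_
      cases hoi : χ i with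
      | none => rw [hoi] at he; simp at he
      | some e' =>
        rw [hoi] at he
        rw [Option.mem_def, Option.some.injEq] at he
        subst he
        simp [hterm, heT]
  -- if Ec χ = S then all choices are edges, so C χ = 1
  have hCone : ∀ χ ∈ Fintype.piFinset Opt, Ec χ = S → C χ = 1 := by
    intro χ hχ hES
    have hall : ∀ i, (χ i).isSome := by
      by_contra hcon2
      push_neg at hcon2
      obtain ⟨i0, hi0⟩ := hcon2
      have hnone : χ i0 = none := Option.not_isSome_iff_eq_none.mp (by simpa using hi0)
      have hcount : S.card ≤ ∑ i : ι, (χ i).toFinset.card := by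
        rw [← hES, hEc]
        exact Finset.card_biUnion_le
      have hsum2 : ∑ i : ι, (χ i).toFinset.card
          = ∑ i ∈ Finset.univ.erase i0, (χ i).toFinset.card := by
        rw [← Finset.add_sum_erase _ _ (Finset.mem_univ i0), hnone]
        simp
      have hsum3 : ∑ i ∈ Finset.univ.erase i0, (χ i).toFinset.card
          ≤ (Finset.univ.erase i0).card := by
        refine Finset.sum_le_card_nsmul _ _ 1 (fun i _ => ?_) |>.trans (by simp)
        cases χ i <;> simp
      have hcard_erase : (Finset.univ.erase i0).card = Fintype.card ι - 1 := by
        rw [Finset.card_erase_of_mem (Finset.mem_univ i0), Finset.card_univ]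
      have hpos : 0 < Fintype.card ι := Fintype.card_pos_iff.mpr ⟨i0⟩
      omega
    rw [hC]
    refine Finset.prod_eq_one fun i _ => ?_
    obtain ⟨e, he⟩ := Option.isSome_iff_exists.mp (hall i)
    rw [he]
    rfl
  -- the key computation
  have hkey : ∑ T ∈ S.powerset,
      (-1 : ℤ) ^ (S.card - T.card) * ∏ i : ι, ((({e ∈ T | inc i e}).card : ℤ) - k i)
      = ∑ χ ∈ Fintype.piFinset Opt, (if Ec χ = S then 1 else 0) := by
    calc ∑ T ∈ S.powerset,
        (-1 : ℤ) ^ (S.card - T.card) * ∏ i : ι, ((({e ∈ T | inc i e}).card : ℤ) - k i)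
        = ∑ T ∈ S.powerset, ∑ χ ∈ Fintype.piFinset Opt,
            (-1 : ℤ) ^ (S.card - T.card) * ((if Ec χ ⊆ T then 1 else 0) * C χ) := by
          refine Finset.sum_congr rfl fun T hT => ?_
          rw [hPsum T (Finset.mem_powerset.mp hT), Finset.mul_sum]
          exact Finset.sum_congr rfl fun χ _ => by rw [hsplit T χ]
      _ = ∑ χ ∈ Fintype.piFinset Opt, (∑ T ∈ S.powerset,
            (-1 : ℤ) ^ (S.card - T.card) * (if Ec χ ⊆ T then 1 else 0)) * C χ := by
          rw [Finset.sum_comm]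
          refine Finset.sum_congr rfl fun χ _ => ?_
          rw [Finset.sum_mul]
          exact Finset.sum_congr rfl fun T _ => by ring
      _ = ∑ χ ∈ Fintype.piFinset Opt, (if Ec χ = S then 1 else 0) * C χ := by
          refine Finset.sum_congr rfl fun χ hχ => ?_
          rw [alt_sum_indicator S (Ec χ) (hEcS χ hχ)]
      _ = ∑ χ ∈ Fintype.piFinset Opt, (if Ec χ = S then 1 else 0) := by
          refine Finset.sum_congr rfl fun χ hχ => ?_
          by_cases h : Ec χ = S
          · rw [if_pos h, one_mul, hCone χ hχ h]
          · rw [if_neg h, zero_mul]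
  -- the witness choice function
  have hwit : (0 : ℤ) < ∑ χ ∈ Fintype.piFinset Opt, (if Ec χ = S then 1 else 0) := by
    set χ0 : ι → Option E := fun i => some (f i) with hχ0
    have h0 : χ0 ∈ Fintype.piFinset Opt := by
      rw [Fintype.mem_piFinset]
      intro i
      rw [hOpt]
      refine Finset.mem_insert_of_mem ?_
      rw [Finset.mem_map]
      exact ⟨f i, Finset.mem_filter.mpr ⟨hfS i, hfinc i⟩, rfl⟩
    have h1 : Ec χ0 = S := by
      have himg : Ec χ0 = Finset.univ.image f := by
        ext e
        rw [hEc, Finset.mem_biUnion, Finset.mem_image]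
        constructor
        · rintro ⟨i, _, he⟩
          rw [hχ0] at he
          simp only [Option.toFinset_some, Finset.mem_singleton] at he
          exact ⟨i, Finset.mem_univ i, he.symm⟩
        · rintro ⟨i, _, rfl⟩
          exact ⟨i, Finset.mem_univ i, by rw [hχ0]; simp⟩
      have hsub : Finset.univ.image f ⊆ S := by
        intro e he
        rw [Finset.mem_image] at he
        obtain ⟨i, _, rfl⟩ := he
        exact hfS i
      have hc : (Finset.univ.image f).card = S.card := by
        rw [Finset.card_image_of_injective _ hinj, Finset.card_univ, hcardS]
      rw [himg]
      exact Finset.eq_of_subset_of_card_le hsub (le_of_eq hc.symm)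
    calc (0 : ℤ) < 1 := one_pos
      _ = if Ec χ0 = S then (1 : ℤ) else 0 := by rw [if_pos h1]
      _ ≤ ∑ χ ∈ Fintype.piFinset Opt, (if Ec χ = S then 1 else 0) := by
          refine Finset.single_le_sum (f := fun χ => if Ec χ = S then (1 : ℤ) else 0) (fun χ _ => ?_) h0
          split <;> norm_num
  rw [hzero] at hkey
  exact absurd hkey.symm (ne_of_gt hwit)

end Core2

/-- **Shirazi–Verstraëte.** If `H(v) ⊆ {0, 1, …, d_G(v)}` and
`|H(v)| > ⌈d_G(v)/2⌉` for all vertices `v`, then `G` has an `H`-factor. -/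
theorem shirazi_verstraete {V : Type*} [Fintype V] (G : SimpleGraph V)
    (H : V → Set ℕ) (hH : ∀ v, H v ⊆ Set.Iic (ndeg G v))
    (hcard : ∀ v, (ndeg G v + 1) / 2 < (H v).ncard) :
    ∃ F ≤ G, ∀ v, ndeg F v ∈ H v := by
  classical
  set J : V → Finset ℕ := fun v => {k ∈ Finset.Iic (ndeg G v) | k ∉ H v} with hJ
  -- |J v| ≤ ndeg G v / 2
  have hJcard : ∀ v, (J v).card ≤ ndeg G v / 2 := by
    intro v
    have hpart : (J v).card + ({k ∈ Finset.Iic (ndeg G v) | ¬ k ∉ H v}).card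
        = (Finset.Iic (ndeg G v)).card := Finset.card_filter_add_card_filter_not
      (s := Finset.Iic (ndeg G v)) (p := fun k => k ∉ H v)
    have hIic : (Finset.Iic (ndeg G v)).card = ndeg G v + 1 := Nat.card_Iic _
    have hfin : (H v).Finite := Set.Finite.subset (Set.finite_Iic _) (hH v)
    have heq : {k ∈ Finset.Iic (ndeg G v) | ¬ k ∉ H v} = hfin.toFinset := by
      ext k
      simp only [Finset.mem_filter, Finset.mem_Iic, not_not, Set.Finite.mem_toFinset]
      exact ⟨fun h => h.2, fun h => ⟨hH v h, h⟩⟩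
    have hHv : (H v).ncard = ({k ∈ Finset.Iic (ndeg G v) | ¬ k ∉ H v}).card := by
      rw [heq, Set.ncard_eq_toFinset_card _ hfin]
    have := hcard v
    rw [hHv] at this
    omega
  -- The factor index type
  set Fac : Finset ((_ : V) × ℕ) := (Finset.univ : Finset V).sigma J with hFac
  set ι := {p : (_ : V) × ℕ // p ∈ Fac}
  set t : ι → Finset (Sym2 V) := fun p => {e ∈ G.edgeFinset | p.1.1 ∈ e} with ht
  -- Hall's condition
  have hall : ∀ A : Finset ι, A.card ≤ (A.biUnion t).card := by
    intro A
    set B : Finset ((_ : V) × ℕ) := A.image Subtype.val with hB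
    have hAB : A.card = B.card := (Finset.card_image_of_injective _ Subtype.val_injective).symm
    set W : Finset V := B.image Sigma.fst with hW
    set EW : Finset (Sym2 V) := W.biUnion (fun v => {e ∈ G.edgeFinset | v ∈ e}) with hEW
    -- A.biUnion t = EW
    have hbu : A.biUnion t = EW := by
      ext e
      simp only [Finset.mem_biUnion, hEW, hW, hB, Finset.mem_image, ht, Finset.mem_filter]
      constructor
      · rintro ⟨p, hp, he⟩
        exact ⟨p.1.1, ⟨p.1, ⟨p, hp, rfl⟩, rfl⟩, he⟩
      · rintro ⟨v, ⟨q, ⟨p, hp, rfl⟩, rfl⟩, he⟩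
        exact ⟨p, hp, he⟩
    -- B ⊆ W.sigma J
    have hBW : B ⊆ W.sigma J := by
      intro p hp
      rw [Finset.mem_sigma]
      refine ⟨Finset.mem_image_of_mem _ hp, ?_⟩
      rw [hB, Finset.mem_image] at hp
      obtain ⟨a, _, rfl⟩ := hp
      exact (Finset.mem_sigma.mp a.2).2
    have h1 : A.card ≤ ∑ v ∈ W, (J v).card := by
      rw [hAB]
      calc B.card ≤ (W.sigma J).card := Finset.card_le_card hBW
        _ = ∑ v ∈ W, (J v).card := Finset.card_sigma _ _
    -- degrees as filters of EW
    have hdv : ∀ v ∈ W, ndeg G v = ({e ∈ EW | v ∈ e}).card := by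
      intro v hv
      rw [ndeg_eq]
      congr 1
      ext e
      simp only [Finset.mem_filter, hEW, Finset.mem_biUnion]
      constructor
      · rintro ⟨he, hve⟩
        exact ⟨⟨v, hv, by simp [he, hve]⟩, hve⟩
      · rintro ⟨⟨u, _, hu⟩, hve⟩
        exact ⟨hu.1, hve⟩
    -- double counting
    have hdc : ∑ v ∈ W, ndeg G v ≤ 2 * EW.card := by
      calc ∑ v ∈ W, ndeg G v = ∑ v ∈ W, ({e ∈ EW | v ∈ e}).card := by
            exact Finset.sum_congr rfl hdv
        _ = ∑ v ∈ W, ∑ e ∈ EW, (if v ∈ e then 1 else 0) := by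
            refine Finset.sum_congr rfl fun v _ => ?_
            rw [Finset.card_filter]
        _ = ∑ e ∈ EW, ∑ v ∈ W, (if v ∈ e then 1 else 0) := Finset.sum_comm
        _ = ∑ e ∈ EW, ({v ∈ W | v ∈ e}).card := by
            refine Finset.sum_congr rfl fun e _ => ?_
            rw [Finset.card_filter]
        _ ≤ ∑ e ∈ EW, 2 := by
            refine Finset.sum_le_sum fun e _ => ?_
            induction e using Sym2.ind with
            | _ a b =>
              calc ({v ∈ W | v ∈ s(a, b)} : Finset V).card
                  ≤ ({a, b} : Finset V).card := by
                    apply Finset.card_le_card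
                    intro x hx
                    have := (Finset.mem_filter.mp hx).2
                    rw [Sym2.mem_iff] at this
                    simp [this]
                _ ≤ 2 := Finset.card_insert_le _ _ |>.trans (by simp)
        _ = 2 * EW.card := by rw [Finset.sum_const, smul_eq_mul, mul_comm]
    have h2 : ∑ v ∈ W, (J v).card ≤ EW.card := by
      have h3 : 2 * ∑ v ∈ W, (J v).card ≤ ∑ v ∈ W, ndeg G v := by
        rw [Finset.mul_sum]
        refine Finset.sum_le_sum fun v _ => ?_
        have := hJcard v
        omega
      omega
    rw [hbu]
    exact h1.trans h2
  obtain ⟨f, hinj, hmem⟩ := (Finset.all_card_le_biUnion_card_iff_exists_injective t).mp hall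
  set S : Finset (Sym2 V) := Finset.univ.image f with hS
  have hScard : S.card = Fintype.card ι := by
    rw [hS, Finset.card_image_of_injective _ hinj, Finset.card_univ]
  have hSE : S ⊆ G.edgeFinset := by
    intro e he
    rw [hS, Finset.mem_image] at he
    obtain ⟨p, _, rfl⟩ := he
    exact (Finset.mem_filter.mp (hmem p)).1
  obtain ⟨T, hTS, hprod⟩ := core S (fun (p : ι) e => p.1.1 ∈ e) (fun p => p.1.2) hScard f hinj
    (fun i => Finset.mem_image_of_mem f (Finset.mem_univ i))
    (fun i => (Finset.mem_filter.mp (hmem i)).2)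
  rw [Finset.mem_powerset] at hTS
  have hTE : T ⊆ G.edgeFinset := hTS.trans hSE
  -- extract the conclusion from the nonzero product
  have hne : ∀ v, ∀ k ∈ J v, ({e ∈ T | v ∈ e}).card ≠ k := by
    intro v k hk hcontra
    apply hprod
    have hp : (⟨v, k⟩ : (_ : V) × ℕ) ∈ Fac := by
      rw [hFac, Finset.mem_sigma]; exact ⟨Finset.mem_univ _, hk⟩
    refine Finset.prod_eq_zero (Finset.mem_univ (⟨⟨v, k⟩, hp⟩ : ι)) ?_
    simp [hcontra]
  have hdT : ∀ v, ({e ∈ T | v ∈ e}).card ≤ ndeg G v := by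
    intro v
    rw [ndeg_eq]
    apply Finset.card_le_card
    intro e he
    rw [Finset.mem_filter] at he ⊢
    exact ⟨hTE he.1, he.2⟩
  have hmemH : ∀ v, ({e ∈ T | v ∈ e}).card ∈ H v := by
    intro v
    by_contra hcon
    refine hne v _ ?_ rfl
    rw [hJ, Finset.mem_filter, Finset.mem_Iic]
    exact ⟨hdT v, hcon⟩
  -- build the graph
  refine ⟨SimpleGraph.fromEdgeSet (↑T : Set (Sym2 V)), ?_, ?_⟩
  · calc SimpleGraph.fromEdgeSet (↑T : Set (Sym2 V)) ≤ SimpleGraph.fromEdgeSet G.edgeSet := by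
          apply SimpleGraph.fromEdgeSet_mono
          intro e he
          exact SimpleGraph.mem_edgeFinset.mp (hTE he)
       _ = G := SimpleGraph.fromEdgeSet_edgeSet G
  · intro v
    have hedge : (SimpleGraph.fromEdgeSet (↑T : Set (Sym2 V))).edgeSet = ↑T := by
      rw [SimpleGraph.edgeSet_fromEdgeSet]
      ext e
      simp only [Set.mem_diff, Set.mem_setOf_eq, Finset.mem_coe, and_iff_left_iff_imp]
      intro he
      exact G.not_isDiag_of_mem_edgeSet (SimpleGraph.mem_edgeFinset.mp (hTE he))
    rw [ndeg_eq]
    convert hmemH v using 2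
    ext e
    simp [SimpleGraph.mem_edgeFinset, hedge]
end

section
/- Let G be a graph with a set function H : V(G) → 2^ℕ with H(v) ⊆ {0, 1, ..., d_G(v)}. If G admits an orientation in which every vertex v has in-degree d⁻(v) ≥ |{0, 1, ..., d_G(v)} \ H(v)|, then G has an H-factor. -/
lemma fls_aux {V : Type*} [Fintype V] (n : ℕ) :
    ∀ (G : SimpleGraph V) (H : V → Set ℕ) (D : V → V → Prop),
      G.edgeSet.ncard = n →
      (∀ v, H v ⊆ Set.Iic (ndeg G v)) →
      (∀ x y, G.Adj x y ↔ (D x y ∨ D y x)) →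
      (∀ x y, D x y → ¬ D y x) →
      (∀ v, (Set.Iic (ndeg G v) \ H v).ncard ≤ {u | D u v}.ncard) →
      ∃ F ≤ G, ∀ v, ndeg F v ∈ H v := by
  induction n using Nat.strong_induction_on with
  | _ n ih =>
    intro G H D hn hH hor hasym hin
    by_cases hall : ∀ v, ndeg G v ∈ H v
    · exact ⟨G, le_refl G, hall⟩
    push_neg at hall
    obtain ⟨v, hv⟩ := hall
    have hmem : ndeg G v ∈ Set.Iic (ndeg G v) \ H v := ⟨Set.mem_Iic.2 le_rfl, hv⟩
    have hfin1 : (Set.Iic (ndeg G v) \ H v).Finite :=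
      (Set.finite_Iic _).subset Set.diff_subset
    have hpos : 0 < {u | D u v}.ncard :=
      lt_of_lt_of_le ((Set.ncard_pos hfin1).2 ⟨_, hmem⟩) (hin v)
    obtain ⟨u, humem⟩ := Set.nonempty_of_ncard_ne_zero hpos.ne'
    have hu : D u v := humem
    have hadj : G.Adj u v := (hor u v).2 (Or.inl hu)
    have hne : u ≠ v := hadj.ne
    set G' := G.deleteEdges {s(u,v)} with hG'
    have hle : G' ≤ G := SimpleGraph.deleteEdges_le _
    -- neighbor sets
    have hNv : G'.neighborSet v = G.neighborSet v \ {u} := by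
      ext x
      simp only [SimpleGraph.mem_neighborSet, hG', SimpleGraph.deleteEdges_adj,
        Set.mem_singleton_iff, Set.mem_diff, Sym2.eq_iff]
      constructor
      · rintro ⟨h1, h2⟩
        refine ⟨h1, fun hx => h2 ?_⟩
        subst hx
        tauto
      · rintro ⟨h1, h2⟩
        refine ⟨h1, fun hx => ?_⟩
        rcases hx with ⟨h3, h4⟩ | ⟨h3, h4⟩
        · exact hne h3.symm
        · exact h2 h4
    have hNu : G'.neighborSet u = G.neighborSet u \ {v} := by
      ext x
      simp only [SimpleGraph.mem_neighborSet, hG', SimpleGraph.deleteEdges_adj,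
        Set.mem_singleton_iff, Set.mem_diff, Sym2.eq_iff]
      constructor
      · rintro ⟨h1, h2⟩
        refine ⟨h1, fun hx => h2 ?_⟩
        subst hx
        tauto
      · rintro ⟨h1, h2⟩
        refine ⟨h1, fun hx => ?_⟩
        rcases hx with ⟨h3, h4⟩ | ⟨h3, h4⟩
        · exact h2 h4
        · exact hne h3
    have hNw : ∀ w, w ≠ u → w ≠ v → G'.neighborSet w = G.neighborSet w := by
      intro w hwu hwv
      ext x
      simp only [SimpleGraph.mem_neighborSet, hG', SimpleGraph.deleteEdges_adj,
        Set.mem_singleton_iff, Sym2.eq_iff]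
      constructor
      · exact fun h => h.1
      · intro h
        refine ⟨h, fun hx => ?_⟩
        rcases hx with ⟨h3, h4⟩ | ⟨h3, h4⟩
        · exact hwu h3
        · exact hwv h3
    have huv : u ∈ G.neighborSet v := hadj.symm
    have hvu : v ∈ G.neighborSet u := hadj
    have hdv : ndeg G' v = ndeg G v - 1 := by
      unfold ndeg
      rw [hNv, Set.ncard_diff_singleton_of_mem huv]
    have hdu : ndeg G' u = ndeg G u - 1 := by
      unfold ndeg
      rw [hNu, Set.ncard_diff_singleton_of_mem hvu]
    have hdvpos : 0 < ndeg G v := (Set.ncard_pos (Set.toFinite _)).2 ⟨u, huv⟩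
    -- edge count
    have hE : G'.edgeSet = G.edgeSet \ {s(u,v)} := SimpleGraph.edgeSet_deleteEdges _
    have heme : s(u,v) ∈ G.edgeSet := (SimpleGraph.mem_edgeSet G).2 hadj
    have hEc : G'.edgeSet.ncard = n - 1 := by
      rw [hE, Set.ncard_diff_singleton_of_mem heme, hn]
    have hnpos : 0 < n := by
      rw [← hn]
      exact (Set.ncard_pos (Set.toFinite _)).2 ⟨_, heme⟩
    -- new data
    set D' : V → V → Prop := fun x y => D x y ∧ ¬(x = u ∧ y = v) with hD'
    set H' : V → Set ℕ := fun w => H w ∩ Set.Iic (ndeg G' w) with hH'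
    have hH'eq : ∀ w, H' w = H w ∩ Set.Iic (ndeg G' w) := fun w => rfl
    have hH'sub : ∀ w, H' w ⊆ Set.Iic (ndeg G' w) := fun w => Set.inter_subset_right
    have hD'eq : ∀ x y, D' x y ↔ (D x y ∧ ¬(x = u ∧ y = v)) := fun x y => Iff.rfl
    have hor' : ∀ x y, G'.Adj x y ↔ (D' x y ∨ D' y x) := by
      intro x y
      rw [hG', SimpleGraph.deleteEdges_adj, Set.mem_singleton_iff, hD'eq, hD'eq]
      constructor
      · rintro ⟨h1, h2⟩
        rcases (hor x y).1 h1 with h | h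
        · exact Or.inl ⟨h, fun ⟨hxu, hyv⟩ => h2 (by rw [hxu, hyv])⟩
        · refine Or.inr ⟨h, ?_⟩
          rintro ⟨rfl, rfl⟩
          exact h2 Sym2.eq_swap
      · rintro (⟨h, hne'⟩ | ⟨h, hne'⟩)
        · refine ⟨(hor x y).2 (Or.inl h), ?_⟩
          intro heq
          rcases Sym2.eq_iff.1 heq with ⟨rfl, rfl⟩ | ⟨rfl, rfl⟩
          · exact hne' ⟨rfl, rfl⟩
          · exact hasym _ _ hu h
        · refine ⟨(hor x y).2 (Or.inr h), ?_⟩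
          intro heq
          rcases Sym2.eq_iff.1 heq with ⟨rfl, rfl⟩ | ⟨rfl, rfl⟩
          · exact hasym _ _ hu h
          · exact hne' ⟨rfl, rfl⟩
    have hasym' : ∀ x y, D' x y → ¬ D' y x := fun x y h h2 => hasym x y h.1 h2.1
    have hin' : ∀ w, (Set.Iic (ndeg G' w) \ H' w).ncard ≤ {x | D' x w}.ncard := by
      intro w
      by_cases hwv : w = v
      · subst hwv
        have h1 : Set.Iic (ndeg G' w) \ H' w = Set.Iic (ndeg G w - 1) \ H w := by
          rw [hH'eq, Set.diff_inter_self_eq_diff, hdv]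
        have h2 : Set.Iic (ndeg G w) \ H w
            = insert (ndeg G w) (Set.Iic (ndeg G w - 1) \ H w) := by
          ext x
          simp only [Set.mem_diff, Set.mem_Iic, Set.mem_insert_iff]
          constructor
          · rintro ⟨hx1, hx2⟩
            rcases eq_or_lt_of_le hx1 with h | h
            · exact Or.inl h
            · exact Or.inr ⟨by omega, hx2⟩
          · rintro (rfl | ⟨hx1, hx2⟩)
            · exact ⟨le_rfl, hv⟩
            · exact ⟨by omega, hx2⟩
        have h3 : ndeg G w ∉ Set.Iic (ndeg G w - 1) \ H w := by
          intro h
          have := h.1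
          simp only [Set.mem_Iic] at this
          omega
        have h4 : (Set.Iic (ndeg G w) \ H w).ncard
            = (Set.Iic (ndeg G w - 1) \ H w).ncard + 1 := by
          rw [h2, Set.ncard_insert_of_notMem h3
            ((Set.finite_Iic _).subset Set.diff_subset)]
        have h5 : {x | D' x w} = {x | D x w} \ {u} := by
          ext x
          simp only [hD'eq, Set.mem_setOf_eq, Set.mem_diff, Set.mem_singleton_iff]
          tauto
        have h6 : {x | D' x w}.ncard = {x | D x w}.ncard - 1 := by
          rw [h5, Set.ncard_diff_singleton_of_mem
            (show u ∈ {x | D x w} from hu)]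
        have h7 := hin w
        rw [h1, h6]
        omega
      · have h5 : {x | D' x w} = {x | D x w} := by
          ext x
          simp only [hD'eq, Set.mem_setOf_eq]
          exact ⟨fun h => h.1, fun h => ⟨h, fun hh => hwv hh.2⟩⟩
        by_cases hwu : w = u
        · subst hwu
          have h1 : Set.Iic (ndeg G' w) \ H' w = Set.Iic (ndeg G w - 1) \ H w := by
            rw [hH'eq, Set.diff_inter_self_eq_diff, hdu]
          have h2 : Set.Iic (ndeg G w - 1) \ H w ⊆ Set.Iic (ndeg G w) \ H w := by
            intro x hx
            refine ⟨?_, hx.2⟩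
            have := hx.1
            simp only [Set.mem_Iic] at this ⊢
            omega
          calc (Set.Iic (ndeg G' w) \ H' w).ncard
              ≤ (Set.Iic (ndeg G w) \ H w).ncard := by
                rw [h1]
                exact Set.ncard_le_ncard h2 ((Set.finite_Iic _).subset Set.diff_subset)
            _ ≤ {x | D x w}.ncard := hin w
            _ = {x | D' x w}.ncard := (congrArg _ h5).symm
        · have hdw : ndeg G' w = ndeg G w := by
            unfold ndeg; rw [hNw w hwu hwv]
          have h1 : H' w = H w := by
            rw [hH'eq, hdw]
            exact Set.inter_eq_left.2 (hH w)
          rw [h1, hdw, h5]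
          exact hin w
    obtain ⟨F, hF1, hF2⟩ := ih (n - 1) (by omega) G' H' D' hEc hH'sub hor' hasym' hin'
    exact ⟨F, hF1.trans hle, fun w => ((hH'eq w ▸ hF2 w : _ ∈ H w ∩ _).1)⟩

/-- **Frank–Lau–Szabó.** If `H(v) ⊆ {0, 1, …, d_G(v)}` and `G` has an
orientation `D` in which every vertex `v` has in-degree at least
`|{0, 1, …, d_G(v)} \ H(v)|`, then `G` has an `H`-factor. -/
theorem frank_lau_szabo {V : Type*} [Fintype V] (G : SimpleGraph V)
    (H : V → Set ℕ) (hH : ∀ v, H v ⊆ Set.Iic (ndeg G v))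
    (D : V → V → Prop)
    (hor : ∀ x y, G.Adj x y ↔ (D x y ∨ D y x))
    (hasym : ∀ x y, D x y → ¬ D y x)
    (hin : ∀ v, (Set.Iic (ndeg G v) \ H v).ncard ≤ {u | D u v}.ncard) :
    ∃ F ≤ G, ∀ v, ndeg F v ∈ H v := by
  exact fls_aux G.edgeSet.ncard G H D rfl hH hor hasym hin
end

section
/- For any even integer r ≥ 6, there exists a connected r-regular simple graph G* of even order such that G* has no H*-factor, where H* is the set of odd positive integers at most r, excluding r/2 - 1, r/2, and r/2 + 1. In particular, G* has no {k, r-k}-factor for any odd k with 1 ≤ k ≤ r/2 - 2. -/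
open Finset
open scoped Classical
namespace NHF

abbrev W (r a b : ℕ) := Option ((Fin a × Fin (r+1)) ⊕ (Fin b × Fin (r+2)))

def gAdj (r a b : ℕ) : W r a b → W r a b → Prop
  | none, none => False
  | none, some (.inl (_, j)) => j.val < 2
  | none, some (.inr (_, j)) => j.val = 0 ∨ j.val = 2
  | some (.inl (_, j)), none => j.val < 2
  | some (.inr (_, j)), none => j.val = 0 ∨ j.val = 2
  | some (.inl (i, j)), some (.inl (i', j')) => i = i' ∧ j ≠ j' ∧ j.val + j'.val ≠ 1
  | some (.inr (i, j)), some (.inr (i', j')) => i = i' ∧ j.val / 2 ≠ j'.val / 2 ∧ j.val + j'.val ≠ 2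
  | some (.inl _), some (.inr _) => False
  | some (.inr _), some (.inl _) => False

def myG (r a b : ℕ) : SimpleGraph (W r a b) where
  Adj := gAdj r a b
  symm := by
    constructor
    rintro (_|(⟨i,j⟩|⟨i,j⟩)) (_|(⟨i',j'⟩|⟨i',j'⟩)) h <;>
      simp only [gAdj, Fin.ext_iff] at h ⊢ <;> omega
  loopless := by
    constructor
    rintro (_|(⟨i,j⟩|⟨i,j⟩)) h <;> simp only [gAdj, Fin.ext_iff] at h <;> omega

lemma myG_adj (r a b : ℕ) : (myG r a b).Adj = gAdj r a b := rfl

variable {r a b : ℕ}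

lemma ndeg_set {V : Type*} (F : SimpleGraph V) (v : V) :
    ndeg F v = {w | F.Adj v w}.ncard := rfl

lemma ncard_option {A B : Type*} [Fintype A] [Fintype B] (P : Option (A ⊕ B) → Prop) :
    {x | P x}.ncard = (if P none then 1 else 0)
      + ({p : A | P (some (.inl p))}.ncard + {p : B | P (some (.inr p))}.ncard) := by
  rw [Set.ncard_eq_toFinset_card', Set.toFinset_setOf,
    Set.ncard_eq_toFinset_card', Set.toFinset_setOf,
    Set.ncard_eq_toFinset_card', Set.toFinset_setOf]
  rw [Finset.card_filter, univ_option, Finset.sum_insertNone]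
  simp only [Fintype.sum_sum_type]
  rw [← Finset.card_filter, ← Finset.card_filter]

lemma ncard_prod {A B : Type*} [Fintype A] [Fintype B] (P : A × B → Prop) :
    {p : A × B | P p}.ncard = ∑ i : A, {j : B | P (i, j)}.ncard := by
  rw [Set.ncard_eq_toFinset_card', Set.toFinset_setOf, Finset.card_filter,
    Fintype.sum_prod_type]
  refine Finset.sum_congr rfl (fun i _ => ?_)
  rw [Set.ncard_eq_toFinset_card', Set.toFinset_setOf, Finset.card_filter]

lemma ncard_ite {A : Type*} [Fintype A] (P : A → Prop) :
    {x | P x}.ncard = ∑ x : A, if P x then 1 else 0 := by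
  rw [Set.ncard_eq_toFinset_card', Set.toFinset_setOf, Finset.card_filter]

lemma countA_attach (hr6 : 6 ≤ r) :
    {j : Fin (r+1) | j.val < 2}.ncard = 2 := by
  rw [Set.ncard_eq_toFinset_card', Set.toFinset_setOf]
  have h : univ.filter (fun j : Fin (r+1) => j.val < 2)
      = {(⟨0, by omega⟩ : Fin (r+1)), ⟨1, by omega⟩} := by
    ext j'; simp only [Finset.mem_filter, Finset.mem_univ, true_and, Finset.mem_insert, Finset.mem_singleton, Fin.ext_iff, ne_eq]; omega
  rw [h, card_insert_of_notMem (by simp [Fin.ext_iff]), card_singleton]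

lemma countB_attach (hr6 : 6 ≤ r) :
    {j : Fin (r+2) | j.val = 0 ∨ j.val = 2}.ncard = 2 := by
  rw [Set.ncard_eq_toFinset_card', Set.toFinset_setOf]
  have h : univ.filter (fun j : Fin (r+2) => j.val = 0 ∨ j.val = 2)
      = {(⟨0, by omega⟩ : Fin (r+2)), ⟨2, by omega⟩} := by
    ext j'; simp only [Finset.mem_filter, Finset.mem_univ, true_and, Finset.mem_insert, Finset.mem_singleton, Fin.ext_iff]
  rw [h, card_insert_of_notMem (by simp [Fin.ext_iff]), card_singleton]

lemma countA_in (hr6 : 6 ≤ r) (j : Fin (r+1)) :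
    {j' : Fin (r+1) | j ≠ j' ∧ j.val + j'.val ≠ 1}.ncard
      = if j.val < 2 then r - 1 else r := by
  rw [Set.ncard_eq_toFinset_card', Set.toFinset_setOf]
  have key := Finset.card_filter_add_card_filter_not (s := univ)
    (p := fun j' : Fin (r+1) => j ≠ j' ∧ j.val + j'.val ≠ 1)
  rw [Finset.card_univ, Fintype.card_fin] at key
  by_cases hj : j.val < 2
  · have hneg : univ.filter (fun j' : Fin (r+1) => ¬(j ≠ j' ∧ j.val + j'.val ≠ 1))
        = {(⟨0, by omega⟩ : Fin (r+1)), ⟨1, by omega⟩} := by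
      ext j'; simp only [Finset.mem_filter, Finset.mem_univ, true_and, Finset.mem_insert, Finset.mem_singleton, Fin.ext_iff, ne_eq]; omega
    rw [hneg, card_insert_of_notMem (by simp [Fin.ext_iff]), card_singleton] at key
    rw [if_pos hj]; omega
  · have hneg : univ.filter (fun j' : Fin (r+1) => ¬(j ≠ j' ∧ j.val + j'.val ≠ 1))
        = {j} := by
      ext j'; simp [Fin.ext_iff]; omega
    rw [hneg, card_singleton] at key
    rw [if_neg hj]; omega

lemma countB_in (hr : r % 2 = 0) (hr6 : 6 ≤ r) (j : Fin (r+2)) :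
    {j' : Fin (r+2) | j.val / 2 ≠ j'.val / 2 ∧ j.val + j'.val ≠ 2}.ncard
      = if j.val = 0 ∨ j.val = 2 then r - 1 else r := by
  rw [Set.ncard_eq_toFinset_card', Set.toFinset_setOf]
  have key := Finset.card_filter_add_card_filter_not (s := univ)
    (p := fun j' : Fin (r+2) => j.val / 2 ≠ j'.val / 2 ∧ j.val + j'.val ≠ 2)
  rw [Finset.card_univ, Fintype.card_fin] at key
  have hlt := j.isLt
  by_cases h0 : j.val = 0
  · have hneg : univ.filter (fun j' : Fin (r+2) => ¬(j.val / 2 ≠ j'.val / 2 ∧ j.val + j'.val ≠ 2))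
        = {(⟨0, by omega⟩ : Fin (r+2)), ⟨1, by omega⟩, ⟨2, by omega⟩} := by
      ext j'; simp only [Finset.mem_filter, Finset.mem_univ, true_and, Finset.mem_insert, Finset.mem_singleton, Fin.ext_iff, ne_eq]; omega
    rw [hneg, card_insert_of_notMem (by simp [Fin.ext_iff]),
      card_insert_of_notMem (by simp [Fin.ext_iff]), card_singleton] at key
    rw [if_pos (Or.inl h0)]; omega
  · by_cases h2 : j.val = 2
    · have hneg : univ.filter
          (fun j' : Fin (r+2) => ¬(j.val / 2 ≠ j'.val / 2 ∧ j.val + j'.val ≠ 2))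
          = {(⟨0, by omega⟩ : Fin (r+2)), ⟨2, by omega⟩, ⟨3, by omega⟩} := by
        ext j'; simp only [Finset.mem_filter, Finset.mem_univ, true_and, Finset.mem_insert, Finset.mem_singleton, Fin.ext_iff, ne_eq]; omega
      rw [hneg, card_insert_of_notMem (by simp [Fin.ext_iff]),
        card_insert_of_notMem (by simp [Fin.ext_iff]), card_singleton] at key
      rw [if_pos (Or.inr h2)]; omega
    · have hneg : univ.filter
          (fun j' : Fin (r+2) => ¬(j.val / 2 ≠ j'.val / 2 ∧ j.val + j'.val ≠ 2))
          = {(⟨2*(j.val/2), by omega⟩ : Fin (r+2)), ⟨2*(j.val/2)+1, by omega⟩} := by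
        ext j'; simp [Fin.ext_iff]; omega
      rw [hneg, card_insert_of_notMem (by simp [Fin.ext_iff]), card_singleton] at key
      rw [if_neg (by tauto)]; omega

lemma myG_degree (hr : r % 2 = 0) (hr6 : 6 ≤ r) (hab : 2*a + 2*b = r) (w : W r a b) :
    ndeg (myG r a b) w = r := by
  rw [ndeg_set, ncard_option]
  match w with
  | none =>
      rw [if_neg (SimpleGraph.irrefl _)]
      have e1 : {p : Fin a × Fin (r+1) | (myG r a b).Adj none (some (.inl p))}
          = {p | p.2.val < 2} := rfl
      have e2 : {p : Fin b × Fin (r+2) | (myG r a b).Adj none (some (.inr p))}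
          = {p | p.2.val = 0 ∨ p.2.val = 2} := rfl
      rw [e1, e2, ncard_prod, ncard_prod]
      simp only [countA_attach hr6, countB_attach hr6]
      simp only [Finset.sum_const, Finset.card_univ, Fintype.card_fin, smul_eq_mul]
      omega
  | some (.inl (i, j)) =>
      have e1 : {p : Fin a × Fin (r+1) | (myG r a b).Adj (some (.inl (i,j))) (some (.inl p))}
          = {p | i = p.1 ∧ j ≠ p.2 ∧ j.val + p.2.val ≠ 1} := rfl
      have e2 : {p : Fin b × Fin (r+2) | (myG r a b).Adj (some (.inl (i,j))) (some (.inr p))}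
          = ∅ := by
        ext p; simp only [Set.mem_setOf_eq, Set.mem_empty_iff_false, iff_false, myG_adj]
        exact fun h => h
      rw [e1, e2, ncard_prod, Set.ncard_empty]
      have hA : ∀ i' : Fin a,
          {j' : Fin (r+1) | i = i' ∧ j ≠ j' ∧ j.val + j'.val ≠ 1}.ncard
          = if i = i' then (if j.val < 2 then r - 1 else r) else 0 := by
        intro i'
        by_cases hi : i = i'
        · rw [if_pos hi, ← countA_in hr6 j]
          congr 1; ext j'; simp [hi]
        · rw [if_neg hi]
          have : {j' : Fin (r+1) | i = i' ∧ j ≠ j' ∧ j.val + j'.val ≠ 1} = ∅ := by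
            ext j'; simp [hi]
          rw [this, Set.ncard_empty]
      simp only [hA]
      rw [Finset.sum_ite_eq]
      simp only [Finset.mem_univ, if_true]
      by_cases hj : j.val < 2
      · rw [if_pos hj, if_pos (show (myG r a b).Adj (some (Sum.inl (i,j))) none from hj)]; omega
      · rw [if_neg hj, if_neg (show ¬ (myG r a b).Adj (some (Sum.inl (i,j))) none from hj)]; omega
  | some (.inr (i, j)) =>
      have e1 : {p : Fin a × Fin (r+1) | (myG r a b).Adj (some (.inr (i,j))) (some (.inl p))}
          = ∅ := by
        ext p; simp only [Set.mem_setOf_eq, Set.mem_empty_iff_false, iff_false, myG_adj]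
        exact fun h => h
      have e2 : {p : Fin b × Fin (r+2) | (myG r a b).Adj (some (.inr (i,j))) (some (.inr p))}
          = {p | i = p.1 ∧ j.val / 2 ≠ p.2.val / 2 ∧ j.val + p.2.val ≠ 2} := rfl
      rw [e1, e2, ncard_prod, Set.ncard_empty]
      have hB : ∀ i' : Fin b,
          {j' : Fin (r+2) | i = i' ∧ j.val / 2 ≠ j'.val / 2 ∧ j.val + j'.val ≠ 2}.ncard
          = if i = i' then (if j.val = 0 ∨ j.val = 2 then r - 1 else r) else 0 := by
        intro i'
        by_cases hi : i = i'
        · rw [if_pos hi, ← countB_in hr hr6 j]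
          congr 1; ext j'; simp [hi]
        · rw [if_neg hi]
          have : {j' : Fin (r+2) | i = i' ∧ j.val / 2 ≠ j'.val / 2 ∧ j.val + j'.val ≠ 2} = ∅ := by
            ext j'; simp [hi]
          rw [this, Set.ncard_empty]
      simp only [hB]
      rw [Finset.sum_ite_eq]
      simp only [Finset.mem_univ, if_true]
      by_cases hj : j.val = 0 ∨ j.val = 2
      · rw [if_pos hj, if_pos (show (myG r a b).Adj (some (Sum.inr (i,j))) none from hj)]; omega
      · rw [if_neg hj, if_neg (show ¬ (myG r a b).Adj (some (Sum.inr (i,j))) none from hj)]; omega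

lemma myG_connected (hr6 : 6 ≤ r) : (myG r a b).Connected := by
  have hreach : ∀ w, (myG r a b).Reachable none w := by
    rintro (_|(⟨i,j⟩|⟨i,j⟩))
    · exact SimpleGraph.Reachable.refl _
    · by_cases hj : j.val < 2
      · exact (show (myG r a b).Adj none (some (.inl (i,j))) from hj).reachable
      · refine SimpleGraph.Reachable.trans
          ((show (myG r a b).Adj none (some (.inl (i, ⟨0, by omega⟩))) from by
            show (0:ℕ) < 2; omega).reachable)
          ((show (myG r a b).Adj (some (.inl (i, ⟨0, by omega⟩))) (some (.inl (i,j))) from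
            ⟨rfl, by simp [Fin.ext_iff]; omega, by simp; omega⟩).reachable)
    · rcases Nat.lt_or_ge j.val 3 with hj | hj
      · have h3 : j.val = 0 ∨ j.val = 1 ∨ j.val = 2 := by omega
        rcases h3 with h0 | h1 | h2
        · exact (show (myG r a b).Adj none (some (.inr (i,j))) from Or.inl h0).reachable
        · refine SimpleGraph.Reachable.trans
            ((show (myG r a b).Adj none (some (.inr (i, ⟨2, by omega⟩))) from
              Or.inr rfl).reachable)
            ((show (myG r a b).Adj (some (.inr (i, ⟨2, by omega⟩))) (some (.inr (i,j))) from
              ⟨rfl, by show (2:ℕ)/2 ≠ j.val/2; omega, by show (2:ℕ) + j.val ≠ 2; omega⟩).reachable)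
        · exact (show (myG r a b).Adj none (some (.inr (i,j))) from Or.inr h2).reachable
      · refine SimpleGraph.Reachable.trans
          ((show (myG r a b).Adj none (some (.inr (i, ⟨0, by omega⟩))) from
            Or.inl rfl).reachable)
          ((show (myG r a b).Adj (some (.inr (i, ⟨0, by omega⟩))) (some (.inr (i,j))) from
            ⟨rfl, by show (0:ℕ)/2 ≠ j.val/2; omega, by show (0:ℕ) + j.val ≠ 2; omega⟩).reachable)
  haveI : Nonempty (W r a b) := ⟨none⟩
  exact ⟨fun u v => (hreach u).symm.trans (hreach v)⟩

lemma ncard_eq_degree {V : Type*} [Fintype V] (G : SimpleGraph V) [DecidableRel G.Adj] (v : V) :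
    (G.neighborSet v).ncard = G.degree v := by
  rw [← SimpleGraph.card_neighborSet_eq_degree, ← Nat.card_coe_set_eq,
    Nat.card_eq_fintype_card]

lemma even_sum_inner {V : Type*} [Fintype V] (F : SimpleGraph V) (S : Finset V) :
    Even (∑ u ∈ S, {w | F.Adj u w ∧ w ∈ S}.ncard) := by
  set F' : SimpleGraph V :=
    { Adj := fun u w => F.Adj u w ∧ u ∈ S ∧ w ∈ S
      symm := ⟨fun u w h => ⟨h.1.symm, h.2.2, h.2.1⟩⟩
      loopless := ⟨fun u h => F.loopless.irrefl u h.1⟩ } with hF'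
  haveI : DecidableRel F'.Adj := Classical.decRel _
  have h1 : ∀ u ∈ S, {w | F.Adj u w ∧ w ∈ S}.ncard = F'.degree u := by
    intro u hu
    rw [← ncard_eq_degree]
    congr 1
    ext w
    simp only [SimpleGraph.mem_neighborSet, Set.mem_setOf_eq, hF']
    tauto
  have h2 : ∀ u ∈ univ, u ∉ S → F'.degree u = 0 := by
    intro u _ hu
    rw [← ncard_eq_degree]
    have h : F'.neighborSet u = ∅ := by
      ext w; simp only [SimpleGraph.mem_neighborSet, hF']
      simp only [Set.mem_empty_iff_false, iff_false]
      tauto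
    rw [h, Set.ncard_empty]
  rw [Finset.sum_congr rfl h1, Finset.sum_subset (Finset.subset_univ S) h2,
    SimpleGraph.sum_degrees_eq_twice_card_edges]
  exact even_two_mul _

lemma key (hr : r % 2 = 0) (hr6 : 6 ≤ r) (hab : 2*a + 2*b = r) (hb : b ≤ 1)
    (F : SimpleGraph (W r a b)) (hF : F ≤ myG r a b) (hodd : ∀ u, Odd (ndeg F u)) :
    a ≤ ndeg F none ∧ ndeg F none ≤ a + 2*b := by
  have hdec : ndeg F none
      = (∑ i : Fin a, {j : Fin (r+1) | F.Adj none (some (.inl (i,j)))}.ncard)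
      + ∑ i : Fin b, {j : Fin (r+2) | F.Adj none (some (.inr (i,j)))}.ncard := by
    rw [ndeg_set, ncard_option, if_neg (SimpleGraph.irrefl _),
      ncard_prod (P := fun p : Fin a × Fin (r+1) => F.Adj none (some (.inl p))),
      ncard_prod (P := fun p : Fin b × Fin (r+2) => F.Adj none (some (.inr p))),
      zero_add]
  have hA : ∀ i : Fin a, {j : Fin (r+1) | F.Adj none (some (.inl (i,j)))}.ncard = 1 := by
    intro i
    set S : Finset (W r a b) := univ.image (fun j : Fin (r+1) => some (.inl (i,j))) with hS
    have hinj : Function.Injective (fun j : Fin (r+1) => (some (.inl (i,j)) : W r a b)) := by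
      intro x y h; simpa using h
    have hmem : ∀ w, w ∈ S ↔ ∃ j, w = some (Sum.inl (i,j)) := by
      intro w; simp [hS, eq_comm]
    have hcardS : S.card = r + 1 := by
      rw [hS, Finset.card_image_of_injective _ hinj, Finset.card_univ, Fintype.card_fin]
    have hsplit : ∀ u ∈ S, ndeg F u
        = {w | F.Adj u w ∧ w ∈ S}.ncard + {w | F.Adj u w ∧ w ∉ S}.ncard := by
      intro u _
      have e : {w | F.Adj u w} = {w | F.Adj u w ∧ w ∈ S} ∪ {w | F.Adj u w ∧ w ∉ S} := by
        ext w; by_cases hw : w ∈ S <;> simp [hw]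
      rw [ndeg_set, e, Set.ncard_union_eq ?_ (Set.toFinite _) (Set.toFinite _)]
      rw [Set.disjoint_left]
      rintro w ⟨_, h1⟩ ⟨_, h2⟩; exact h2 h1
    have hout : ∀ u ∈ S, {w | F.Adj u w ∧ w ∉ S}.ncard
        = if F.Adj u none then 1 else 0 := by
      intro u hu
      obtain ⟨j, rfl⟩ := (hmem u).mp hu
      have hsub : ∀ w, F.Adj (some (Sum.inl (i,j))) w → w ∉ S → w = none := by
        intro w haw hw
        match w with
        | none => rfl
        | some (.inl (i',j')) =>
          exact absurd ((hmem _).mpr ⟨j', by rw [(hF haw).1]⟩) hw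
        | some (.inr q) => exact ((hF haw) : False).elim
      by_cases hadj : F.Adj (some (Sum.inl (i,j))) none
      · rw [if_pos hadj]
        have e : {w | F.Adj (some (Sum.inl (i,j))) w ∧ w ∉ S} = {none} := by
          ext w
          simp only [Set.mem_setOf_eq, Set.mem_singleton_iff]
          constructor
          · rintro ⟨haw, hw⟩; exact hsub w haw hw
          · rintro rfl
            refine ⟨hadj, fun hn => ?_⟩
            obtain ⟨j', hj'⟩ := (hmem none).mp hn
            exact (by cases hj')
        rw [e, Set.ncard_singleton]
      · rw [if_neg hadj]
        have e : {w | F.Adj (some (Sum.inl (i,j))) w ∧ w ∉ S} = ∅ := by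
          ext w
          simp only [Set.mem_setOf_eq, Set.mem_empty_iff_false, iff_false, not_and]
          intro haw hw
          exact hadj ((hsub w haw hw) ▸ haw)
        rw [e, Set.ncard_empty]
    have hodds : (∑ u ∈ S, ndeg F u) % 2 = 1 := by
      have h1 : ∀ u ∈ S, ndeg F u % 2 = 1 := fun u _ => Nat.odd_iff.mp (hodd u)
      calc (∑ u ∈ S, ndeg F u) % 2 = (∑ u ∈ S, ndeg F u % 2) % 2 :=
            Finset.sum_nat_mod _ _ _
        _ = (∑ _u ∈ S, 1) % 2 := by rw [Finset.sum_congr rfl h1]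
        _ = (r+1) % 2 := by rw [Finset.sum_const, smul_eq_mul, mul_one, hcardS]
        _ = 1 := by omega
    have hsum : ∑ u ∈ S, ndeg F u
        = (∑ u ∈ S, {w | F.Adj u w ∧ w ∈ S}.ncard)
          + ∑ u ∈ S, (if F.Adj u none then 1 else 0) := by
      rw [← Finset.sum_add_distrib]
      exact Finset.sum_congr rfl (fun u hu => by rw [hsplit u hu, hout u hu])
    obtain ⟨t, ht⟩ := even_sum_inner F S
    have hcA : ∑ u ∈ S, (if F.Adj u none then 1 else 0)
        = {j : Fin (r+1) | F.Adj none (some (.inl (i,j)))}.ncard := by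
      rw [hS, Finset.sum_image (fun x _ y _ h => hinj h), ncard_ite]
      exact Finset.sum_congr rfl (fun j _ =>
        if_congr (SimpleGraph.adj_comm F _ _) rfl rfl)
    have hle : {j : Fin (r+1) | F.Adj none (some (.inl (i,j)))}.ncard ≤ 2 := by
      have hsub : {j : Fin (r+1) | F.Adj none (some (.inl (i,j)))}
          ⊆ {j : Fin (r+1) | j.val < 2} := fun j hj => hF hj
      exact (Set.ncard_le_ncard hsub (Set.toFinite _)).trans_eq (countA_attach hr6)
    rw [hsum, ht, hcA] at hodds
    omega
  have hB : ∀ i : Fin b, {j : Fin (r+2) | F.Adj none (some (.inr (i,j)))}.ncard ≤ 2 := by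
    intro i
    have hsub : {j : Fin (r+2) | F.Adj none (some (.inr (i,j)))}
        ⊆ {j : Fin (r+2) | j.val = 0 ∨ j.val = 2} := fun j hj => hF hj
    exact (Set.ncard_le_ncard hsub (Set.toFinite _)).trans_eq (countB_attach hr6)
  rw [hdec]
  simp only [hA]
  rw [Finset.sum_const, Finset.card_univ, Fintype.card_fin, smul_eq_mul, mul_one]
  constructor
  · exact Nat.le_add_right _ _
  · have := Finset.sum_le_sum (s := (univ : Finset (Fin b)))
      (fun i _ => hB i)
    have h2 : (∑ _i : Fin b, 2) = 2 * b := by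
      rw [Finset.sum_const, Finset.card_univ, Fintype.card_fin, smul_eq_mul, mul_comm]
    omega



lemma ndeg_comap {V V' : Type*} (phi : V' ≃ V) (H : SimpleGraph V) (x : V') :
    ndeg (H.comap ⇑phi) x = ndeg H (phi x) := by
  rw [ndeg_set, ndeg_set]
  have h1 : {w | (H.comap ⇑phi).Adj x w} = ⇑phi ⁻¹' {w | H.Adj (phi x) w} := rfl
  have h2 : ⇑phi.symm '' {w | H.Adj (phi x) w} = ⇑phi ⁻¹' {w | H.Adj (phi x) w} := by
    rw [Equiv.image_eq_preimage_symm, Equiv.symm_symm]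
  rw [h1, ← h2, Set.ncard_image_of_injective _ phi.symm.injective]

end NHF


/-- For any even `r ≥ 6` there is a connected `r`-regular simple graph of even
order with no `H*`-factor, where
`H* = [r]_odd \ {r/2 - 1, r/2, r/2 + 1}`; in particular, it has no
`{k, r-k}`-factor for any odd `k` with `1 ≤ k ≤ r/2 - 2`. -/
theorem no_Hstar_factor {r : ℕ} (hr : Even r) (hr6 : 6 ≤ r) :
    ∃ (n : ℕ) (G : SimpleGraph (Fin n)),
      Even n ∧ G.Connected ∧ (∀ v, ndeg G v = r) ∧
      (¬ ∃ F ≤ G, ∀ v, ndeg F v ∈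
        {h : ℕ | Odd h ∧ 1 ≤ h ∧ h ≤ r ∧
          h ≠ r / 2 - 1 ∧ h ≠ r / 2 ∧ h ≠ r / 2 + 1}) ∧
      (∀ k : ℕ, Odd k → 1 ≤ k → k ≤ r / 2 - 2 →
        ¬ ∃ F ≤ G, ∀ v, ndeg F v = k ∨ ndeg F v = r - k) := by
  classical
  have hr2 : r % 2 = 0 := Nat.even_iff.mp hr
  set m := r / 2 with hm
  set b : ℕ := if m % 2 = 0 then 1 else 0 with hbdef
  set a : ℕ := m - b with hadef
  have hb1 : b ≤ 1 := by rw [hbdef]; split <;> omega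
  have hab : 2*a + 2*b = r := by
    rw [hadef, hbdef]; split <;> omega
  have haodd : a % 2 = 1 := by
    rw [hadef, hbdef]; split <;> omega
  set n := Fintype.card (NHF.W r a b) with hn
  set phi : NHF.W r a b ≃ Fin n := Fintype.equivFin (NHF.W r a b) with hphi
  set G : SimpleGraph (Fin n) := (NHF.myG r a b).comap ⇑phi.symm with hG
  have hcard : n = a * (r+1) + b * (r+2) + 1 := by
    rw [hn]
    simp [Fintype.card_option, Fintype.card_sum, Fintype.card_prod, Fintype.card_fin]
  -- pullback of subgraphs
  have pull : ∀ F : SimpleGraph (Fin n), F ≤ G →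
      (F.comap ⇑phi ≤ NHF.myG r a b) ∧ ∀ u, ndeg (F.comap ⇑phi) u = ndeg F (phi u) := by
    intro F hFG
    constructor
    · intro u w h
      have h2 : G.Adj (phi u) (phi w) := hFG h
      rw [hG] at h2
      simpa using h2
    · intro u; exact NHF.ndeg_comap phi F u
  refine ⟨n, G, ?_, ?_, ?_, ?_, ?_⟩
  · have e1 : (a*(r+1)) % 2 = 1 := by
      rw [Nat.mul_mod, haodd, show (r+1)%2 = 1 by omega]
    have e2 : (b*(r+2)) % 2 = 0 := by
      rw [Nat.mul_mod, show (r+2)%2 = 0 by omega, mul_zero]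
      rfl
    rw [Nat.even_iff, hcard]; omega
  · have iso : G ≃g NHF.myG r a b := { toEquiv := phi.symm, map_rel_iff' := Iff.rfl }
    exact (SimpleGraph.Iso.connected_iff iso).mpr (NHF.myG_connected hr6)
  · intro v
    rw [show G = (NHF.myG r a b).comap ⇑phi.symm from hG,
      NHF.ndeg_comap phi.symm (NHF.myG r a b) v]
    exact NHF.myG_degree hr2 hr6 hab _
  · rintro ⟨F, hFG, hall⟩
    obtain ⟨hle, hdeg⟩ := pull F hFG
    have hodd : ∀ u, Odd (ndeg (F.comap ⇑phi) u) := by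
      intro u; rw [hdeg u]; exact (hall (phi u)).1
    obtain ⟨h1, h2⟩ := NHF.key hr2 hr6 hab hb1 (F.comap ⇑phi) hle hodd
    rw [hdeg none] at h1 h2
    obtain ⟨-, -, -, e1, e2, e3⟩ := hall (phi none)
    have hoddd := (hall (phi none)).1
    rw [Nat.odd_iff] at hoddd
    omega
  · rintro k hk hk1 hk2 ⟨F, hFG, hall⟩
    obtain ⟨hle, hdeg⟩ := pull F hFG
    rw [Nat.odd_iff] at hk
    have hodd : ∀ u, Odd (ndeg (F.comap ⇑phi) u) := by
      intro u; rw [hdeg u, Nat.odd_iff]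
      rcases hall (phi u) with h | h <;> rw [h] <;> omega
    obtain ⟨h1, h2⟩ := NHF.key hr2 hr6 hab hb1 (F.comap ⇑phi) hle hodd
    rw [hdeg none] at h1 h2
    rcases hall (phi none) with h | h <;> omega
end

section
/- Let r be an even integer such that r/2 is even. Then every connected r-regular graph of even order has a spanning subgraph F in which every vertex has degree r/2 - 1 or r/2 + 1. -/
section HalfFactorAux

open SimpleGraph Finset

variable {V : Type*} [Fintype V] [DecidableEq V] {G : SimpleGraph V}


variable {V : Type*} [Fintype V] [DecidableEq V] {G : SimpleGraph V}

omit [Fintype V] [DecidableEq V] in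
/-- extend a trail by an unused incident edge at its start -/
lemma hf_trail_extend {u v : V} {p : G.Walk u v} (hp : p.IsTrail) {e : Sym2 V}
    (he : e ∈ G.incidenceSet u) (hne : e ∉ p.edges) :
    ∃ (a b : V) (q : G.Walk a b), q.IsTrail ∧ q.length = p.length + 1 := by
  obtain ⟨hemem, hue⟩ := he
  set w := Sym2.Mem.other hue with hw
  have hspec : s(u, w) = e := Sym2.other_spec hue
  have hadj : G.Adj u w := by
    rw [← SimpleGraph.mem_edgeSet, hspec]; exact hemem
  refine ⟨w, v, SimpleGraph.Walk.cons hadj.symm p, ?_, by simp⟩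
  rw [SimpleGraph.Walk.isTrail_cons]
  refine ⟨hp, fun hmem => hne ?_⟩
  rwa [Sym2.eq_swap, hspec] at hmem

omit [Fintype V] [DecidableEq V] in
lemma hf_key {u w : V} (p : G.Walk u w) :
    ∀ {a y : V} (q : G.Walk a y), y ∈ p.support → (∃ e' ∈ G.incidenceSet a, e' ∉ p.edges) →
    ∃ x ∈ p.support, ∃ e' ∈ G.incidenceSet x, e' ∉ p.edges := by
  intro a y q
  induction q with
  | nil => exact fun hy h => ⟨_, hy, h⟩
  | cons hadj q ih =>
    rename_i a b _
    intro hy h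
    by_cases hx : a ∈ p.support
    · exact ⟨a, hx, h⟩
    · refine ih hy ⟨s(a, b), ⟨hadj, Sym2.mem_mk_right a b⟩, fun hmem => hx ?_⟩
      exact SimpleGraph.Walk.fst_mem_support_of_mem_edges p hmem

lemma hf_euler_exists [DecidableRel G.Adj] (hconn : G.Connected)
    (heven : ∀ v : V, Even (G.degree v)) :
    ∃ (u : V) (p : G.Walk u u), p.IsTrail ∧ ∀ e ∈ G.edgeSet, e ∈ p.edges := by
  classical
  have hne : Nonempty V := hconn.nonempty
  obtain ⟨u0⟩ := hne
  set P : ℕ → Prop := fun n => ∃ (a b : V) (p : G.Walk a b), p.IsTrail ∧ p.length = n with hP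
  have hbound : ∀ n, P n → n ≤ Fintype.card (Sym2 V) := by
    rintro n ⟨a, b, p, hp, rfl⟩
    calc p.length = p.edges.length := (SimpleGraph.Walk.length_edges p).symm
    _ ≤ Fintype.card (Sym2 V) := List.Nodup.length_le_card hp.edges_nodup
  have hP0 : P 0 := ⟨u0, u0, SimpleGraph.Walk.nil, SimpleGraph.Walk.IsTrail.nil, rfl⟩
  set N := Nat.findGreatest P (Fintype.card (Sym2 V)) with hN
  have hPN : P N := Nat.findGreatest_spec (Nat.zero_le _) hP0
  have hmax : ∀ n, P n → n ≤ N := fun n hn => Nat.le_findGreatest (hbound n hn) hn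
  obtain ⟨u, v, p, hp, hlen⟩ := hPN
  have hext : ∀ (a b : V) (q : G.Walk a b), q.IsTrail → q.length = N →
      ∀ e ∈ G.incidenceSet a, e ∈ q.edges := by
    intro a b q hq hql e he
    by_contra hne
    obtain ⟨a', b', q', hq', hql'⟩ := hf_trail_extend hq he hne
    have := hmax _ ⟨a', b', q', hq', rfl⟩
    omega
  -- the walk is closed
  have huv : u = v := by
    by_contra hne
    have hcnt : ¬ Even (p.edges.countP fun e => u ∈ e) := by
      rw [hp.even_countP_edges_iff u]
      tauto
    have hall : ∀ e ∈ G.incidenceSet u, e ∈ p.edges := hext u v p hp hlen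
    have hfil : (p.edges.filter fun e => u ∈ e).toFinset = G.incidenceFinset u := by
      ext e
      simp only [List.mem_toFinset, List.mem_filter, SimpleGraph.mem_incidenceFinset,
        decide_eq_true_eq]
      constructor
      · rintro ⟨h1, h2⟩
        exact ⟨p.edges_subset_edgeSet h1, h2⟩
      · rintro ⟨h1, h2⟩
        exact ⟨hall e ⟨h1, h2⟩, h2⟩
    have hcnt2 : (p.edges.countP fun e => u ∈ e) = G.degree u := by
      rw [← SimpleGraph.card_incidenceFinset_eq_degree, ← hfil,
        List.countP_eq_length_filter,
        List.toFinset_card_of_nodup (hp.edges_nodup.filter _)]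
    rw [hcnt2] at hcnt
    exact hcnt (heven u)
  subst huv
  refine ⟨u, p, hp, fun e he => ?_⟩
  by_contra hnotin
  obtain ⟨⟨a, b⟩, rfl⟩ := Quot.exists_rep e
  have hadjab : G.Adj a b := he
  obtain ⟨q⟩ := hconn.preconnected a u
  obtain ⟨x, hx, e', he', hne'⟩ := hf_key p q p.start_mem_support
    ⟨_, ⟨he, Sym2.mem_mk_left a b⟩, hnotin⟩
  set p2 := p.rotate _ hx with hp2
  have hperm : p2.edges.Perm p.edges := (p.rotate_edges _ hx).perm
  have hp2t : p2.IsTrail := by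
    rw [SimpleGraph.Walk.isTrail_def]
    exact hperm.nodup_iff.mpr hp.edges_nodup
  have hp2l : p2.length = N := by
    rw [← SimpleGraph.Walk.length_edges, hperm.length_eq,
      SimpleGraph.Walk.length_edges, hlen]
  exact hne' (hperm.mem_iff.mp (hext x x p2 hp2t hp2l e' he'))


lemma hf_core {m k : ℕ} [NeZero m] (d : ZMod m → G.Dart)
    (hchain : ∀ i, (d i).toProd.2 = (d (i + 1)).toProd.1)
    (hinj : Function.Injective fun i => (d i).edge)
    (hk : ∀ v : V, (Finset.univ.filter fun i => (d i).toProd.1 = v).card = k)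
    (hk1 : 1 ≤ k)
    (hn : Even (Fintype.card V)) :
    ∃ F ≤ G, ∀ v, ndeg F v = k - 1 ∨ ndeg F v = k + 1 := by
  classical
  set A : V → Finset (ZMod m) := fun v => Finset.univ.filter fun i => (d i).toProd.1 = v with hA
  -- m is even
  have hmcard : m = Fintype.card V * k := by
    have h1 : (Finset.univ : Finset (ZMod m)).card
        = ∑ v : V, ((Finset.univ : Finset (ZMod m)).filter fun i => (d i).toProd.1 = v).card :=
      Finset.card_eq_sum_card_fiberwise (fun x _ => Finset.mem_univ _)
    simp only [hk] at h1
    simpa [ZMod.card, Finset.card_univ, mul_comm] using h1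
  obtain ⟨t, ht⟩ := hn
  have hmeven : m % 2 = 0 := by
    have : m = 2 * (t * k) := by rw [hmcard, ht]; ring
    omega
  have hm2 : 2 ≤ m := by
    have := NeZero.ne m
    omega
  -- choose one position per vertex
  have hApos : ∀ v, (A v).Nonempty := by
    intro v
    rw [← Finset.card_pos, hA, hk]
    omega
  set σ : V → ZMod m := fun v => (hApos v).choose with hσ
  have hσA : ∀ v, (d (σ v)).toProd.1 = v := by
    intro v
    have := (hApos v).choose_spec
    simpa [hA] using this
  have hσinj : Function.Injective σ := by
    intro v w h
    rw [← hσA v, ← hσA w, h]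
  set S : Finset (ZMod m) := Finset.univ.image fun v => σ v - 1 with hS
  have hScard : S.card = Fintype.card V := by
    have himg : Function.Injective fun v => σ v - 1 := by
      intro v w h
      apply hσinj
      have := congrArg (fun z => z + 1) h
      simpa using this
    rw [hS, Finset.card_image_of_injective _ himg, Finset.card_univ]
  have hSceven : S.card % 2 = 0 := by omega
  -- the coloring
  set tt : ZMod m → ℕ := fun i => i.val + (S.filter fun x => x.val < i.val).card with htt
  set c : ZMod m → Bool := fun i => decide (tt i % 2 = 1) with hc
  have hval1 : (1 : ZMod m).val = 1 := ZMod.val_one'' (by omega)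
  have hvalinj : Function.Injective (ZMod.val (n := m)) := ZMod.val_injective m
  -- transition lemma
  have htrans : ∀ i : ZMod m, (c (i + 1) = c i) ↔ i ∈ S := by
    intro i
    have hvi : i.val < m := ZMod.val_lt i
    rcases lt_or_eq_of_le (Nat.succ_le_of_lt hvi) with h | h
    · -- i.val + 1 < m
      have hval : (i + 1).val = i.val + 1 := by
        rw [ZMod.val_add, hval1, Nat.mod_eq_of_lt h]
      have hsplit : (S.filter fun x => x.val < (i+1).val).card
          = (S.filter fun x => x.val < i.val).card + (if i ∈ S then 1 else 0) := by
        rw [hval]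
        have : (S.filter fun x => x.val < i.val + 1)
            = (S.filter fun x => x.val < i.val) ∪ (S.filter fun x => x = i) := by
          ext x
          simp only [Finset.mem_filter, Finset.mem_union]
          constructor
          · rintro ⟨hx, hlt⟩
            rcases Nat.lt_succ_iff_lt_or_eq.mp hlt with h' | h'
            · exact Or.inl ⟨hx, h'⟩
            · exact Or.inr ⟨hx, hvalinj h'⟩
          · rintro (⟨hx, hlt⟩ | ⟨hx, rfl⟩)
            · exact ⟨hx, Nat.lt_succ_of_lt hlt⟩
            · exact ⟨hx, Nat.lt_succ_self _⟩
        rw [this, Finset.card_union_of_disjoint, Finset.filter_eq']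
        · split_ifs <;> simp
        · rw [Finset.disjoint_filter]
          intro x _ hlt hxi
          rw [hxi] at hlt
          omega
      rw [hval] at hsplit
      have htv : tt (i + 1) = tt i + 1 + (if i ∈ S then 1 else 0) := by
        rw [htt]
        simp only
        rw [hval, hsplit]
        ring
      rw [hc]
      simp only [decide_eq_decide]
      split_ifs at htv with hiS
      · simp only [hiS, iff_true]
        omega
      · simp only [hiS, iff_false]
        omega
    · -- i.val = m - 1 : wrap around
      have hi1 : i + 1 = 0 := by
        apply hvalinj
        rw [ZMod.val_add, hval1, ZMod.val_zero]
        have h' : i.val + 1 = m := h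
        rw [h', Nat.mod_self]
      have ht0 : tt (i + 1) = 0 := by
        rw [hi1, htt]
        simp
      have hfe : (S.filter fun x => x.val < i.val) = S.erase i := by
        ext x
        have hx : x.val < m := ZMod.val_lt x
        simp only [Finset.mem_filter, Finset.mem_erase]
        constructor
        · rintro ⟨hxS, hlt⟩
          refine ⟨fun hxi => ?_, hxS⟩
          subst hxi; omega
        · rintro ⟨hne, hxS⟩
          refine ⟨hxS, ?_⟩
          have : x.val ≠ i.val := fun hh => hne (hvalinj hh)
          omega
      have hte : tt i = (m - 1) + (S.erase i).card := by
        rw [htt]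
        simp only
        rw [hfe]
        omega
      rw [hc]
      simp only [decide_eq_decide, ht0]
      by_cases hiS : i ∈ S
      · have : (S.erase i).card = S.card - 1 := Finset.card_erase_of_mem hiS
        simp only [hiS, iff_true]
        have hS1 : 1 ≤ S.card := Finset.card_pos.mpr ⟨i, hiS⟩
        omega
      · have : (S.erase i).card = S.card := by rw [Finset.erase_eq_of_notMem hiS]
        simp only [hiS, iff_false]
        omega
  have hσmem : ∀ v, σ v ∈ A v := fun v => (hApos v).choose_spec
  -- membership of i - 1 in S
  have hSiff : ∀ v : V, ∀ i ∈ A v, (i - 1 ∈ S ↔ i = σ v) := by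
    intro v i hi
    constructor
    · intro hmem
      rw [hS] at hmem
      obtain ⟨w, _, hw⟩ := Finset.mem_image.mp hmem
      have hiw : i = σ w := by
        have := congrArg (fun z => z + 1) hw
        simpa using this.symm
      have hv : (d i).toProd.1 = v := by simpa [hA] using hi
      rw [hiw] at hv
      rw [hσA w] at hv
      rw [hiw, hv]
    · rintro rfl
      rw [hS]
      exact Finset.mem_image.mpr ⟨v, Finset.mem_univ v, rfl⟩
  -- the factor
  have hedge : ∀ i, (d i).edge = s((d i).toProd.1, (d i).toProd.2) := by
    intro i
    rw [SimpleGraph.Dart.edge]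
  set F : SimpleGraph V := SimpleGraph.fromEdgeSet {e | ∃ i, c i = true ∧ (d i).edge = e}
    with hF
  have hFG : F ≤ G := by
    intro a b hab
    rw [hF, SimpleGraph.fromEdgeSet_adj] at hab
    obtain ⟨⟨i, _, hie⟩, _⟩ := hab
    rw [← SimpleGraph.mem_edgeSet, ← hie]
    exact (d i).edge_mem
  refine ⟨F, hFG, fun v => ?_⟩
  -- the incident positions
  set B : Finset (ZMod m) := Finset.univ.filter fun i => c i = true ∧ v ∈ (d i).edge with hB
  set other : ZMod m → V := fun i =>
    if (d i).toProd.1 = v then (d i).toProd.2 else (d i).toProd.1 with hother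
  have hoe : ∀ i ∈ B, (d i).edge = s(v, other i) := by
    intro i hi
    rw [hB, Finset.mem_filter] at hi
    obtain ⟨-, -, hmem⟩ := hi
    rw [hother]
    simp only
    by_cases h1 : (d i).toProd.1 = v
    · rw [if_pos h1, hedge, h1]
    · rw [if_neg h1, hedge]
      rw [hedge, Sym2.mem_iff] at hmem
      rcases hmem with h | h
      · exact absurd h.symm h1
      · rw [← h, Sym2.eq_swap]
  have hinjB : Set.InjOn other B := by
    intro i hi j hj hij
    apply hinj
    simp only
    rw [hoe i hi, hoe j hj, hij]
  have hnbhd : F.neighborSet v = ↑(B.image other) := by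
    ext w
    simp only [SimpleGraph.mem_neighborSet, Finset.coe_image, Set.mem_image,
      Finset.mem_coe]
    constructor
    · intro hadj
      rw [hF, SimpleGraph.fromEdgeSet_adj] at hadj
      obtain ⟨⟨i, hci, hie⟩, hne⟩ := hadj
      have hiB : i ∈ B := by
        rw [hB, Finset.mem_filter]
        exact ⟨Finset.mem_univ _, hci, by rw [hie]; exact Sym2.mem_mk_left v w⟩
      refine ⟨i, hiB, ?_⟩
      have := (hoe i hiB).symm.trans hie
      exact (Sym2.congr_right.mp this)
    · rintro ⟨i, hiB, rfl⟩
      rw [hF, SimpleGraph.fromEdgeSet_adj]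
      have hmem := hoe i hiB
      refine ⟨⟨i, ?_, hmem⟩, ?_⟩
      · rw [hB, Finset.mem_filter] at hiB
        exact hiB.2.1
      · intro hvo
        have : (d i).edge = s(v, v) := by rw [hmem, hvo]
        rw [hedge] at this
        rw [Sym2.eq_iff] at this
        have hne := (d i).adj.ne
        rcases this with ⟨h1, h2⟩ | ⟨h1, h2⟩ <;> exact hne (h1.trans h2.symm)
  have hdeg : ndeg F v = B.card := by
    rw [ndeg, hnbhd, Set.ncard_coe_finset, Finset.card_image_of_injOn hinjB]
  -- split B
  set B1 : Finset (ZMod m) := Finset.univ.filter fun i => c i = true ∧ (d i).toProd.1 = v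
    with hB1
  set B2 : Finset (ZMod m) := Finset.univ.filter fun i => c i = true ∧ (d i).toProd.2 = v
    with hB2
  have hBsplit : B = B1 ∪ B2 := by
    ext i
    rw [hB, hB1, hB2, Finset.mem_union]
    simp only [Finset.mem_filter, Finset.mem_univ, true_and]
    rw [hedge, Sym2.mem_iff]
    constructor
    · rintro ⟨hc, h | h⟩
      · exact Or.inl ⟨hc, h.symm⟩
      · exact Or.inr ⟨hc, h.symm⟩
    · rintro (⟨hc, h⟩ | ⟨hc, h⟩)
      · exact ⟨hc, Or.inl h.symm⟩
      · exact ⟨hc, Or.inr h.symm⟩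
  have hdisj : Disjoint B1 B2 := by
    rw [Finset.disjoint_left]
    intro i hi1 hi2
    rw [hB1, Finset.mem_filter] at hi1
    rw [hB2, Finset.mem_filter] at hi2
    exact (d i).adj.ne (hi1.2.2.trans hi2.2.2.symm)
  have hcardB : B.card = B1.card + B2.card := by
    rw [hBsplit, Finset.card_union_of_disjoint hdisj]
  -- B2 via shift
  have hB2card : B2.card
      = (Finset.univ.filter fun i => c (i - 1) = true ∧ (d i).toProd.1 = v).card := by
    apply Finset.card_bij (fun i _ => i + 1)
    · intro i hi
      rw [hB2, Finset.mem_filter] at hi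
      rw [Finset.mem_filter]
      refine ⟨Finset.mem_univ _, ?_, ?_⟩
      · rw [add_sub_cancel_right]
        exact hi.2.1
      · rw [← hchain i]
        exact hi.2.2
    · intro i _ j _ h
      exact add_right_cancel h
    · intro j hj
      rw [Finset.mem_filter] at hj
      refine ⟨j - 1, ?_, by rw [sub_add_cancel]⟩
      rw [hB2, Finset.mem_filter]
      refine ⟨Finset.mem_univ _, ?_, ?_⟩
      · exact hj.2.1
      · rw [hchain (j - 1), sub_add_cancel]
        exact hj.2.2
  -- both as sums over A v
  have hsum1 : B1.card = ∑ i ∈ A v, (if c i = true then 1 else 0) := by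
    have h' : B1 = (A v).filter fun i => c i = true := by
      ext i
      simp [hB1, hA, and_comm]
    rw [Finset.sum_boole, Nat.cast_id, h']
  have hsum2 : (Finset.univ.filter fun i => c (i - 1) = true ∧ (d i).toProd.1 = v).card
      = ∑ i ∈ A v, (if c (i - 1) = true then 1 else 0) := by
    have h' : (Finset.univ.filter fun i => c (i - 1) = true ∧ (d i).toProd.1 = v)
        = (A v).filter fun i => c (i - 1) = true := by
      ext i
      simp [hA, and_comm]
    rw [Finset.sum_boole, Nat.cast_id, h']
  have hsumB : B.card = ∑ i ∈ A v,
      ((if c i = true then 1 else 0) + (if c (i - 1) = true then 1 else 0)) := by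
    rw [Finset.sum_add_distrib, hcardB, hB2card, hsum1, hsum2]
  -- evaluate the sum
  have hins : A v = insert (σ v) ((A v).erase (σ v)) :=
    (Finset.insert_erase (hσmem v)).symm
  have herase1 : ∀ i ∈ (A v).erase (σ v),
      ((if c i = true then 1 else 0) + (if c (i - 1) = true then 1 else 0)) = 1 := by
    intro i hi
    obtain ⟨hne, hiA⟩ := Finset.mem_erase.mp hi
    have hnotS : i - 1 ∉ S := fun h => hne ((hSiff v i hiA).mp h)
    have := (htrans (i - 1)).not.mpr hnotS
    rw [sub_add_cancel] at this
    cases hci : c i <;> cases hci' : c (i - 1)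
    · rw [hci, hci'] at this; exact absurd rfl this
    · simp
    · simp
    · rw [hci, hci'] at this; exact absurd rfl this
  have hfs : ((if c (σ v) = true then 1 else 0)
      + (if c (σ v - 1) = true then 1 else 0)) = 0 ∨
      ((if c (σ v) = true then 1 else 0) + (if c (σ v - 1) = true then 1 else 0)) = 2 := by
    have hmemS : σ v - 1 ∈ S := (hSiff v (σ v) (hσmem v)).mpr rfl
    have := (htrans (σ v - 1)).mpr hmemS
    rw [sub_add_cancel] at this
    cases hci : c (σ v) <;> cases hci' : c (σ v - 1)
    · left; simp
    · rw [hci, hci'] at this; exact absurd this (by simp)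
    · rw [hci, hci'] at this; exact absurd this (by simp)
    · right; simp
  have hsumval : B.card = k - 1
      + ((if c (σ v) = true then 1 else 0) + (if c (σ v - 1) = true then 1 else 0)) := by
    rw [hsumB, hins, Finset.sum_insert (Finset.notMem_erase _ _)]
    rw [Finset.sum_congr rfl herase1, Finset.sum_const, smul_eq_mul, mul_one]
    rw [Finset.card_erase_of_mem (hσmem v)]
    have : (A v).card = k := hk v
    rw [this]
    ring
  rw [hdeg, hsumval]
  rcases hfs with h | h
  · left; rw [h]; omega
  · right; rw [h]; omega

lemma hf_glue [DecidableRel G.Adj] {r : ℕ} (hr : Even r) (hr1 : 1 ≤ r)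
    (hdeg : ∀ v, G.degree v = r)
    (hconn : G.Connected)
    {u : V} (p : G.Walk u u) (hp : p.IsTrail) (hcov : ∀ e ∈ G.edgeSet, e ∈ p.edges)
    (hn : Even (Fintype.card V)) :
    ∃ F ≤ G, ∀ v, ndeg F v = r / 2 - 1 ∨ ndeg F v = r / 2 + 1 := by
  classical
  set m := p.length with hm
  -- m ≠ 0
  have hmne : m ≠ 0 := by
    intro h0
    obtain ⟨v⟩ := hconn.nonempty
    have : 0 < G.degree v := by rw [hdeg]; omega
    obtain ⟨w, hw⟩ := G.degree_pos_iff_exists_adj v |>.mp this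
    have hmem : s(v, w) ∈ p.edges := hcov _ hw
    have h1 : p.edges.length = 0 := by
      rw [SimpleGraph.Walk.length_edges, ← hm, h0]
    rw [List.length_eq_zero_iff] at h1
    rw [h1] at hmem
    exact List.not_mem_nil hmem
  haveI : NeZero m := ⟨hmne⟩
  have hdlen : p.darts.length = m := p.length_darts
  have helen : p.edges.length = m := p.length_edges
  set d : ZMod m → G.Dart := fun i => p.darts.get ⟨i.val, by rw [hdlen]; exact i.val_lt⟩
    with hd
  have hpe : p.edges = p.darts.map SimpleGraph.Dart.edge := rfl
  have hget : ∀ (n : ℕ) (h1 : n < p.edges.length) (h2 : n < p.darts.length),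
      p.edges.get ⟨n, h1⟩ = (p.darts.get ⟨n, h2⟩).edge := by
    intro n h1 h2
    simp [hpe]
  have hincr : ∀ i : ZMod m, i.val + 1 < m → (i + 1).val = i.val + 1 := by
    intro i h
    rw [ZMod.val_add, ZMod.val_one_eq_one_mod,
      Nat.mod_eq_of_lt (show 1 < m by omega), Nat.mod_eq_of_lt h]
  have hwrap : ∀ i : ZMod m, i.val + 1 = m → i + 1 = 0 := by
    intro i h
    apply ZMod.val_injective
    rw [ZMod.val_add, ZMod.val_one_eq_one_mod, ZMod.val_zero]
    rcases eq_or_ne m 1 with h1 | h1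
    · have hm1 : ∀ x : ℕ, x % m = 0 := fun x => by rw [h1]; exact Nat.mod_one x
      exact hm1 _
    · rw [Nat.mod_eq_of_lt (show 1 < m by omega), h, Nat.mod_self]
  -- chain property
  have hchain : ∀ i : ZMod m, (d i).toProd.2 = (d (i + 1)).toProd.1 := by
    intro i
    have hvi : i.val < m := i.val_lt
    have hchain' := List.isChain_iff_getElem.mp p.isChain_dartAdj_darts
    have hb : (i + 1).val < p.darts.length := by rw [hdlen]; exact (i + 1).val_lt
    rcases lt_or_eq_of_le (Nat.succ_le_of_lt hvi) with h | h
    · have h2 : i.val + 1 < p.darts.length := by omega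
      have hstep : (d i).toProd.2 = (p.darts.get ⟨i.val + 1, h2⟩).toProd.1 :=
        hchain' i.val (by omega)
      rw [hstep, hd]
      simp only
      have hFin : (⟨i.val + 1, h2⟩ : Fin p.darts.length)
          = ⟨(i + 1).val, by rw [hdlen]; exact (i + 1).val_lt⟩ :=
        Fin.ext (hincr i h).symm
      rw [hFin]
    · -- wrap around
      have h' : i.val + 1 = m := h
      have hi1 : i + 1 = 0 := hwrap i h'
      have hlast : (d i).toProd.2 = u := by
        have hne : p.darts ≠ [] := by
          intro hnil
          rw [hnil] at hdlen
          simp at hdlen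
          omega
        have : (p.darts.getLast hne).snd = u := by rw [p.getLast_darts_eq_lastDart hne]; rfl
        rw [hd]
        simp only
        have hFin : (⟨i.val, by rw [hdlen]; exact i.val_lt⟩ : Fin p.darts.length)
            = ⟨p.darts.length - 1, by omega⟩ := by
          apply Fin.ext
          simp only
          omega
        rw [hFin, List.get_eq_getElem, ← List.getLast_eq_getElem]
        exact this
      have hhead : (d 0).toProd.1 = u := by
        have hne : p.darts ≠ [] := by
          intro hnil
          rw [hnil] at hdlen
          simp at hdlen
          omega
        have : (p.darts.head hne).fst = u := by rw [p.head_darts_eq_firstDart hne]; rfl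
        rw [hd]
        simp only [ZMod.val_zero]
        rw [← List.get_mk_zero (by omega)] at this
        convert this using 3
      rw [hi1, hlast, hhead]
  -- injectivity of edges
  have hinj : Function.Injective fun i : ZMod m => (d i).edge := by
    intro i j hij
    have hnodup := hp.edges_nodup
    have hget' : ∀ x : ZMod m, (d x).edge
        = p.edges.get ⟨x.val, by rw [helen]; exact x.val_lt⟩ := by
      intro x
      rw [hd]
      exact (hget x.val _ _).symm
    simp only at hij
    rw [hget' i, hget' j] at hij
    have := List.nodup_iff_injective_get.mp hnodup hij
    apply ZMod.val_injective
    exact congrArg Fin.val this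
  -- surjectivity
  have hsurj : ∀ e ∈ G.edgeSet, ∃ i : ZMod m, (d i).edge = e := by
    intro e he
    obtain ⟨⟨j, hj⟩, hje⟩ := List.mem_iff_get.mp (hcov e he)
    refine ⟨(j : ZMod m), ?_⟩
    have hjm : j < m := by omega
    have hval : ((j : ℕ) : ZMod m).val = j := ZMod.val_cast_of_lt hjm
    rw [← hje, hget j hj (by omega)]
    simp only [hd]
    congr 1
    exact congrArg p.darts.get (Fin.ext hval)
  -- counting: each vertex is the first coordinate of exactly r / 2 darts
  have hk : ∀ v : V, (Finset.univ.filter fun i : ZMod m => (d i).toProd.1 = v).card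
      = r / 2 := by
    intro v
    set Iv := Finset.univ.filter fun i : ZMod m => v ∈ (d i).edge with hIv
    have hIdeg : Iv.card = r := by
      rw [← hdeg v, ← SimpleGraph.card_incidenceFinset_eq_degree]
      apply Finset.card_bij (fun i _ => (d i).edge)
      · intro i hi
        rw [hIv, Finset.mem_filter] at hi
        rw [SimpleGraph.mem_incidenceFinset]
        exact ⟨(d i).edge_mem, hi.2⟩
      · intro i _ j _ h
        exact hinj h
      · intro e he
        rw [SimpleGraph.mem_incidenceFinset] at he
        obtain ⟨i, hi⟩ := hsurj e he.1
        refine ⟨i, ?_, hi⟩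
        rw [hIv, Finset.mem_filter]
        exact ⟨Finset.mem_univ _, by rw [hi]; exact he.2⟩
    have hedge : ∀ i, (d i).edge = s((d i).toProd.1, (d i).toProd.2) := by
      intro i
      rw [SimpleGraph.Dart.edge]
    have hsplit : Iv = (Finset.univ.filter fun i : ZMod m => (d i).toProd.1 = v)
        ∪ (Finset.univ.filter fun i : ZMod m => (d i).toProd.2 = v) := by
      ext i
      rw [hIv, Finset.mem_union]
      simp only [Finset.mem_filter, Finset.mem_univ, true_and]
      rw [hedge, Sym2.mem_iff]
      constructor
      · rintro (h | h)
        · exact Or.inl h.symm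
        · exact Or.inr h.symm
      · rintro (h | h)
        · exact Or.inl h.symm
        · exact Or.inr h.symm
    have hdisj : Disjoint (Finset.univ.filter fun i : ZMod m => (d i).toProd.1 = v)
        (Finset.univ.filter fun i : ZMod m => (d i).toProd.2 = v) := by
      rw [Finset.disjoint_left]
      intro i hi1 hi2
      rw [Finset.mem_filter] at hi1 hi2
      exact (d i).adj.ne (hi1.2.trans hi2.2.symm)
    have hshift : (Finset.univ.filter fun i : ZMod m => (d i).toProd.2 = v).card
        = (Finset.univ.filter fun i : ZMod m => (d i).toProd.1 = v).card := by
      apply Finset.card_bij (fun i _ => i + 1)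
      · intro i hi
        rw [Finset.mem_filter] at hi
        rw [Finset.mem_filter]
        exact ⟨Finset.mem_univ _, by rw [← hchain i]; exact hi.2⟩
      · intro i _ j _ h
        exact add_right_cancel h
      · intro j hj
        rw [Finset.mem_filter] at hj
        refine ⟨j - 1, ?_, by rw [sub_add_cancel]⟩
        rw [Finset.mem_filter]
        refine ⟨Finset.mem_univ _, ?_⟩
        rw [hchain (j - 1), sub_add_cancel]
        exact hj.2
    have h2 : 2 * (Finset.univ.filter fun i : ZMod m => (d i).toProd.1 = v).card = r := by
      rw [← hIdeg, hsplit, Finset.card_union_of_disjoint hdisj, hshift]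
      ring
    omega
  have hrk : 1 ≤ r / 2 := by obtain ⟨s, hs⟩ := hr; omega
  exact hf_core d hchain hinj hk hrk hn

end HalfFactorAux

/-- If `r` is even and `r/2` is even, then every connected `r`-regular graph of
even order has an `{r/2 - 1, r/2 + 1}`-factor. -/
theorem half_factor {r : ℕ} (hr : Even r) (hr2 : Even (r / 2))
    {V : Type*} [Fintype V]
    (G : SimpleGraph V) (hconn : G.Connected) (hreg : ∀ v, ndeg G v = r)
    (horder : Even (Fintype.card V)) :
    ∃ F ≤ G, ∀ v, ndeg F v = r / 2 - 1 ∨ ndeg F v = r / 2 + 1 := by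
  classical
  rcases eq_or_ne r 0 with rfl | hr0
  · refine ⟨G, le_refl G, fun v => Or.inl ?_⟩
    rw [hreg v]
  · have hr1 : 1 ≤ r := by omega
    letI : DecidableRel G.Adj := Classical.decRel _
    have hdeg : ∀ v, G.degree v = r := by
      intro v
      rw [← hreg v, ndeg, Set.ncard_eq_toFinset_card', Set.toFinset_card,
        SimpleGraph.card_neighborSet_eq_degree]
    have heven : ∀ v, Even (G.degree v) := fun v => by rw [hdeg]; exact hr
    obtain ⟨u, p, hp, hcov⟩ := hf_euler_exists hconn heven
    exact hf_glue hr hr1 hdeg hconn p hp hcov horder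
end

section
/- Let 1 ≤ k ≤ r-1, let G be an {r, r+1}-graph, and let U = {v ∈ V(G) : d_G(v) = r+1}. If U is an independent set, then G has a {k, k+1}-factor F such that d_F(u) = k+1 for every u ∈ U. -/
set_option linter.unusedSectionVars false

namespace FactorKey
open Finset

variable {V : Type*} [Fintype V] [DecidableEq V]

/-- Number of edges of `D` incident to `v`. -/
def inc (D : Finset (Sym2 V)) (v : V) : ℕ := (D.filter (fun e => v ∈ e)).card

lemma one_le_inc_of_mem {D : Finset (Sym2 V)} {v : V} {e : Sym2 V}
    (he : e ∈ D) (hv : v ∈ e) : 1 ≤ inc D v := by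
  have h : e ∈ D.filter (fun e => v ∈ e) := Finset.mem_filter.mpr ⟨he, hv⟩
  have := Finset.card_pos.mpr ⟨e, h⟩
  simpa [inc] using this

lemma not_mem_of_inc_zero {D : Finset (Sym2 V)} {v : V} (h : inc D v = 0)
    {e : Sym2 V} (he : e ∈ D) : v ∉ e := by
  intro hv
  have := one_le_inc_of_mem he hv
  omega

lemma inc_insert_of_mem {D : Finset (Sym2 V)} {v : V} {e : Sym2 V}
    (he : e ∉ D) (hv : v ∈ e) : inc (insert e D) v = inc D v + 1 := by
  rw [inc, Finset.filter_insert, if_pos hv,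
    Finset.card_insert_of_notMem (by simp [he])]
  rfl

lemma inc_insert_of_not_mem {D : Finset (Sym2 V)} {v : V} {e : Sym2 V}
    (hv : v ∉ e) : inc (insert e D) v = inc D v := by
  rw [inc, Finset.filter_insert, if_neg hv]
  rfl

lemma inc_erase_of_not_mem {D : Finset (Sym2 V)} {v : V} {e : Sym2 V}
    (hv : v ∉ e) : inc (D.erase e) v = inc D v := by
  rw [inc, Finset.filter_erase, Finset.erase_eq_of_notMem (by simp [hv])]
  rfl

lemma inc_erase_add_one {D : Finset (Sym2 V)} {v : V} {e : Sym2 V}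
    (he : e ∈ D) (hv : v ∈ e) : inc (D.erase e) v + 1 = inc D v := by
  rw [inc, Finset.filter_erase, Finset.card_erase_add_one (by simp [he, hv])]
  rfl

lemma inc_le_of_subset {D D' : Finset (Sym2 V)} (h : D ⊆ D') (v : V) :
    inc D v ≤ inc D' v :=
  Finset.card_le_card (Finset.filter_subset_filter _ h)

/-- `D` is a valid partial deletion set. -/
def Valid (G : SimpleGraph V) (cap : V → ℕ) (D : Finset (Sym2 V)) : Prop :=
  (∀ e ∈ D, e ∈ G.edgeSet) ∧ ∀ v, inc D v ≤ cap v

lemma edge_ne {G : SimpleGraph V} {cap : V → ℕ} {D : Finset (Sym2 V)}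
    (hval : Valid G cap D) {y z : V} (he : s(y, z) ∈ D) : y ≠ z := by
  intro h
  exact G.not_isDiag_of_mem_edgeSet (hval.1 _ he) (by simp [h])

/-- The basic "swap" computation: replace edge `s(y,z')` by `s(z,y)`. -/
lemma swap_spec {G : SimpleGraph V} {cap : V → ℕ} {D : Finset (Sym2 V)} {z y z' : V}
    (hval : Valid G cap D)
    (he : s(y, z') ∈ D) (hz0 : inc D z = 0) (hzy : z ≠ y) :
    z ≠ z' ∧ s(z, y) ∉ D ∧
    inc (insert s(z, y) (D.erase s(y, z'))) z = 1 ∧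
    inc (insert s(z, y) (D.erase s(y, z'))) z' + 1 = inc D z' ∧
    (∀ v, v ≠ z → v ≠ z' → inc (insert s(z, y) (D.erase s(y, z'))) v = inc D v) := by
  have hyz' : y ≠ z' := edge_ne hval he
  have hzz' : z ≠ z' := by
    intro h; subst h
    exact not_mem_of_inc_zero hz0 he (Sym2.mem_mk_right _ _)
  have hzny : z ∉ s(y, z') := by
    simp only [Sym2.mem_iff]; push_neg; exact ⟨hzy, hzz'⟩
  have hzyD : s(z, y) ∉ D := fun h => not_mem_of_inc_zero hz0 h (Sym2.mem_mk_left _ _)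
  have hzyE : s(z, y) ∉ D.erase s(y, z') := fun h => hzyD (Finset.mem_of_mem_erase h)
  refine ⟨hzz', hzyD, ?_, ?_, ?_⟩
  · rw [inc_insert_of_mem hzyE (Sym2.mem_mk_left _ _), inc_erase_of_not_mem hzny, hz0]
  · have hz'nzy : z' ∉ s(z, y) := by
      simp only [Sym2.mem_iff]; push_neg; exact ⟨fun h => hzz' h.symm, fun h => hyz' h.symm⟩
    rw [inc_insert_of_not_mem hz'nzy, inc_erase_add_one he (Sym2.mem_mk_right _ _)]
  · intro v hvz hvz'
    by_cases hvy : v = y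
    · subst hvy
      rw [inc_insert_of_mem hzyE (Sym2.mem_mk_right _ _),
        inc_erase_add_one he (Sym2.mem_mk_left _ _)]
    · have h1 : v ∉ s(z, y) := by
        simp only [Sym2.mem_iff]; push_neg; exact ⟨hvz, hvy⟩
      have h2 : v ∉ s(y, z') := by
        simp only [Sym2.mem_iff]; push_neg; exact ⟨hvy, hvz'⟩
      rw [inc_insert_of_not_mem h1, inc_erase_of_not_mem h2]

variable (G : SimpleGraph V) [DecidableRel G.Adj]

/-- The set of saturated vertices of full degree. -/
def satF (Δ : ℕ) (D : Finset (Sym2 V)) : Finset V :=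
  Finset.univ.filter (fun v => G.degree v = Δ ∧ 1 ≤ inc D v)

lemma mem_satF {Δ : ℕ} {D : Finset (Sym2 V)} {v : V} :
    v ∈ satF G Δ D ↔ G.degree v = Δ ∧ 1 ≤ inc D v := by
  simp [satF]

/-- Alternating reachability for the augmenting argument. -/
inductive Reach (Δ : ℕ) (D₀ : Finset (Sym2 V)) (x : V) :
    Finset (Sym2 V) → V → Finset V → Prop
  | base : Reach Δ D₀ x D₀ x {x}
  | step {D' : Finset (Sym2 V)} {z : V} {H : Finset V} (y z' : V) :
      Reach Δ D₀ x D' z H → G.Adj z y → s(y, z') ∈ D' → G.degree z' = Δ →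
      inc D' z' = 1 → Reach Δ D₀ x (insert s(z, y) (D'.erase s(y, z'))) z' (insert z' H)

/-- Invariants carried along reachable configurations. -/
structure InvData (Δ : ℕ) (cap : V → ℕ) (D₀ : Finset (Sym2 V)) (x : V)
    (D' : Finset (Sym2 V)) (z : V) (H : Finset V) : Prop where
  valid : Valid G cap D'
  zmem : z ∈ H
  incH : ∀ v, v ∉ H → inc D' v = inc D₀ v
  edgeNew : ∀ e ∈ D', e ∉ D₀ → ∃ h ∈ H, h ∈ e
  edgeOld : ∀ e ∈ D₀, e ∉ D' → ∃ h ∈ H, h ∈ e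
  incLe : ∀ h ∈ H, inc D' h ≤ 1
  zzero : inc D' z = 0
  Hdeg : ∀ h ∈ H, G.degree h = Δ
  Hinc : ∀ h ∈ H, inc D₀ h ≤ 1
  satEq : satF G Δ D' = (satF G Δ D₀ ∪ {x}) \ {z}

/-- Reachable vertices. -/
def RS (Δ : ℕ) (D₀ : Finset (Sym2 V)) (x : V) (v : V) : Prop :=
  ∃ D' H, Reach G Δ D₀ x D' v H

lemma reach_of_memH {Δ : ℕ} {D₀ : Finset (Sym2 V)} {x : V}
    {D' : Finset (Sym2 V)} {z : V} {H : Finset V}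
    (h : Reach G Δ D₀ x D' z H) : ∀ v ∈ H, RS G Δ D₀ x v := by
  induction h with
  | base =>
    intro v hv
    rw [Finset.mem_singleton] at hv; subst hv
    exact ⟨D₀, _, Reach.base⟩
  | @step D' z H y z' hr hadj he hdeg hinc1 ih =>
    intro v hv
    rcases Finset.mem_insert.mp hv with rfl | hv
    · exact ⟨_, _, Reach.step y v hr hadj he hdeg hinc1⟩
    · exact ih v hv

section Master

variable {G}
variable {Δ : ℕ} {cap : V → ℕ} {D₀ : Finset (Sym2 V)} {x : V}
variable (hval₀ : Valid G cap D₀) (hcap : ∀ v, 1 ≤ cap v)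
  (hxdeg : G.degree x = Δ) (hx0 : inc D₀ x = 0)
  (hmax : ∀ D, Valid G cap D → (satF G Δ D).card ≤ (satF G Δ D₀).card)

include hval₀ hcap hxdeg hx0 hmax

/-- From the invariant: the saturation count is preserved and `z` is in the base
saturated set (or is `x`). -/
lemma satF_card_aux {D' : Finset (Sym2 V)} {z : V} {H : Finset V}
    (inv : InvData G Δ cap D₀ x D' z H) :
    (satF G Δ D').card = (satF G Δ D₀).card ∧ z ∈ satF G Δ D₀ ∪ {x} := by
  have hxns : x ∉ satF G Δ D₀ := by
    rw [mem_satF]; push_neg; intro _; omega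
  have hA : (satF G Δ D₀ ∪ {x}).card = (satF G Δ D₀).card + 1 := by
    rw [Finset.card_union_of_disjoint (by simp [hxns])]; simp
  have hle : (satF G Δ D').card ≤ (satF G Δ D₀).card := hmax D' inv.valid
  have hsat := inv.satEq
  rw [← Finset.erase_eq] at hsat
  by_cases hzA : z ∈ satF G Δ D₀ ∪ {x}
  · refine ⟨?_, hzA⟩
    rw [hsat, Finset.card_erase_of_mem hzA, hA]
    omega
  · exfalso
    rw [hsat, Finset.erase_eq_of_notMem hzA, hA] at hle
    omega

/-- The master invariant lemma. -/
lemma reach_inv {D' : Finset (Sym2 V)} {z : V} {H : Finset V}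
    (h : Reach G Δ D₀ x D' z H) : InvData G Δ cap D₀ x D' z H := by
  induction h with
  | base =>
    refine ⟨hval₀, Finset.mem_singleton_self x, fun v _ => rfl,
      fun e he hne => absurd he hne, fun e he hne => absurd he hne,
      ?_, hx0, ?_, ?_, ?_⟩
    · intro h hh; rw [Finset.mem_singleton] at hh; subst hh; rw [hx0]; omega
    · intro h hh; rw [Finset.mem_singleton] at hh; subst hh; exact hxdeg
    · intro h hh; rw [Finset.mem_singleton] at hh; subst hh; rw [hx0]; omega
    · have hxns : x ∉ satF G Δ D₀ := by
        rw [mem_satF]; push_neg; intro _; omega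
      ext v
      simp only [Finset.mem_sdiff, Finset.mem_union, Finset.mem_singleton]
      constructor
      · intro hv
        refine ⟨Or.inl hv, ?_⟩
        rintro rfl; exact hxns hv
      · rintro ⟨hv | rfl, hne⟩
        · exact hv
        · exact absurd rfl hne
  | @step D' z H y z' hr hadj he hdeg hinc1 ih =>
    obtain ⟨hzz', hzyD, hz1, hz'dec, hother⟩ :=
      swap_spec ih.valid he ih.zzero (G.ne_of_adj hadj)
    set D'' := insert s(z, y) (D'.erase s(y, z')) with hD''
    have hz'0 : inc D'' z' = 0 := by omega
    have hzH : z ∈ H := ih.zmem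
    have hvalid : Valid G cap D'' := by
      constructor
      · intro e heD
        rcases Finset.mem_insert.mp heD with rfl | hee
        · exact (SimpleGraph.mem_edgeSet G).mpr hadj
        · exact ih.valid.1 _ (Finset.mem_of_mem_erase hee)
      · intro v
        by_cases hv : v = z
        · subst hv; rw [hz1]; exact hcap v
        · by_cases hv' : v = z'
          · subst hv'
            have := ih.valid.2 v
            omega
          · rw [hother v hv hv']; exact ih.valid.2 v
    refine ⟨hvalid, Finset.mem_insert_self _ _, ?_, ?_, ?_, ?_, hz'0, ?_, ?_, ?_⟩
    · intro v hv
      rw [Finset.mem_insert] at hv; push_neg at hv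
      have hvz : v ≠ z := by rintro rfl; exact hv.2 hzH
      rw [hother v hvz hv.1]; exact ih.incH v hv.2
    · intro e heD hne
      rcases Finset.mem_insert.mp heD with rfl | hee
      · exact ⟨z, Finset.mem_insert_of_mem hzH, Sym2.mem_mk_left _ _⟩
      · obtain ⟨h, hh, hhe⟩ := ih.edgeNew e (Finset.mem_of_mem_erase hee) hne
        exact ⟨h, Finset.mem_insert_of_mem hh, hhe⟩
    · intro e heD hne
      by_cases heD' : e ∈ D'
      · have : e = s(y, z') := by
          by_contra hne2
          exact hne (Finset.mem_insert_of_mem (Finset.mem_erase.mpr ⟨hne2, heD'⟩))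
        subst this
        exact ⟨z', Finset.mem_insert_self _ _, Sym2.mem_mk_right _ _⟩
      · obtain ⟨h, hh, hhe⟩ := ih.edgeOld e heD heD'
        exact ⟨h, Finset.mem_insert_of_mem hh, hhe⟩
    · intro h hh
      by_cases h1 : h = z'
      · subst h1; omega
      · rcases Finset.mem_insert.mp hh with rfl | hhH
        · exact absurd rfl h1
        · by_cases h2 : h = z
          · subst h2; omega
          · rw [hother h h2 h1]; exact ih.incLe h hhH
    · intro h hh
      rcases Finset.mem_insert.mp hh with rfl | hhH
      · exact hdeg
      · exact ih.Hdeg h hhH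
    · intro h hh
      rcases Finset.mem_insert.mp hh with rfl | hhH
      · by_cases hzH' : h ∈ H
        · exact ih.Hinc h hzH'
        · rw [← ih.incH h hzH', hinc1]
      · exact ih.Hinc h hhH
    · have hzA : z ∈ satF G Δ D₀ ∪ {x} :=
        (satF_card_aux hval₀ hcap hxdeg hx0 hmax ih).2
      have hdegz : G.degree z = Δ := ih.Hdeg z hzH
      have step1 : satF G Δ D'' = insert z (satF G Δ D') \ {z'} := by
        ext v
        by_cases hv : v = z
        · subst hv
          have hL : v ∈ satF G Δ D'' := (mem_satF G).mpr ⟨hdegz, by rw [hz1]⟩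
          have hR : v ∈ insert v (satF G Δ D') \ {z'} :=
            Finset.mem_sdiff.mpr ⟨Finset.mem_insert_self _ _, by simpa using hzz'⟩
          simp only [hL, hR]
        · by_cases hv' : v = z'
          · subst hv'
            have hL : v ∉ satF G Δ D'' := by
              rw [mem_satF]; push_neg; intro _; omega
            simp only [Finset.mem_sdiff, Finset.mem_singleton]
            constructor
            · intro h; exact absurd h hL
            · rintro ⟨-, h⟩; exact (h trivial).elim
          · have hiff : v ∈ satF G Δ D'' ↔ v ∈ satF G Δ D' := by
              rw [mem_satF, mem_satF, hother v hv hv']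
            simp only [Finset.mem_sdiff, Finset.mem_insert, Finset.mem_singleton, hiff,
              hv, hv', false_or, or_false, not_false_iff, and_true]
      rw [step1, ih.satEq]
      rw [show (satF G Δ D₀ ∪ {x}) \ {z} = (satF G Δ D₀ ∪ {x}).erase z from
        (Finset.erase_eq _ _).symm, Finset.insert_erase hzA]

/-- Adding an available edge at the needy vertex beats the maximum. -/
lemma beats_core {D' : Finset (Sym2 V)} {z : V} {H : Finset V}
    (inv : InvData G Δ cap D₀ x D' z H) {D₂ : Finset (Sym2 V)}
    (hval₂ : Valid G cap D₂)
    (hsub : insert z (satF G Δ D') ⊆ satF G Δ D₂) : False := by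
  have hz : z ∉ satF G Δ D' := by
    rw [mem_satF]; push_neg; intro _
    rw [inv.zzero]; omega
  have h1 := Finset.card_insert_of_notMem hz
  have h2 := Finset.card_le_card hsub
  have h3 := hmax D₂ hval₂
  have h4 := (satF_card_aux hval₀ hcap hxdeg hx0 hmax inv).1
  omega

lemma add_beats {D' : Finset (Sym2 V)} {z : V} {H : Finset V}
    (inv : InvData G Δ cap D₀ x D' z H) {b : V}
    (hadj : G.Adj z b) (hblt : inc D' b < cap b) : False := by
  have hzb : s(z, b) ∉ D' := fun h =>
    not_mem_of_inc_zero inv.zzero h (Sym2.mem_mk_left _ _)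
  have hzbne : z ≠ b := G.ne_of_adj hadj
  have hval₂ : Valid G cap (insert s(z, b) D') := by
    constructor
    · intro e he
      rcases Finset.mem_insert.mp he with rfl | he
      · exact (SimpleGraph.mem_edgeSet G).mpr hadj
      · exact inv.valid.1 _ he
    · intro v
      by_cases hv : v = z
      · subst hv
        rw [inc_insert_of_mem hzb (Sym2.mem_mk_left _ _), inv.zzero]
        exact hcap v
      · by_cases hv' : v = b
        · subst hv'
          rw [inc_insert_of_mem hzb (Sym2.mem_mk_right _ _)]
          omega
        · rw [inc_insert_of_not_mem (by simp only [Sym2.mem_iff]; push_neg; exact ⟨hv, hv'⟩)]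
          exact inv.valid.2 v
  refine beats_core hval₀ hcap hxdeg hx0 hmax inv hval₂ ?_
  intro v hv
  rcases Finset.mem_insert.mp hv with rfl | hv
  · rw [mem_satF]
    refine ⟨inv.Hdeg v inv.zmem, ?_⟩
    rw [inc_insert_of_mem hzb (Sym2.mem_mk_left _ _), inv.zzero]
  · rw [mem_satF] at hv ⊢
    refine ⟨hv.1, le_trans hv.2 (inc_le_of_subset (Finset.subset_insert _ _) v)⟩

lemma swap_beats {D' : Finset (Sym2 V)} {z : V} {H : Finset V}
    (inv : InvData G Δ cap D₀ x D' z H) {y a : V}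
    (hadj : G.Adj z y) (he : s(y, a) ∈ D')
    (hnot : ¬ (G.degree a = Δ ∧ inc D' a = 1)) : False := by
  obtain ⟨hza, hzyD, hz1, hadec, hother⟩ :=
    swap_spec inv.valid he inv.zzero (G.ne_of_adj hadj)
  set D₂ := insert s(z, y) (D'.erase s(y, a)) with hD₂
  have hval₂ : Valid G cap D₂ := by
    constructor
    · intro e heD
      rcases Finset.mem_insert.mp heD with rfl | hee
      · exact (SimpleGraph.mem_edgeSet G).mpr hadj
      · exact inv.valid.1 _ (Finset.mem_of_mem_erase hee)
    · intro v
      by_cases hv : v = z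
      · subst hv; rw [hz1]; exact hcap v
      · by_cases hv' : v = a
        · subst hv'
          have := inv.valid.2 v
          omega
        · rw [hother v hv hv']; exact inv.valid.2 v
  refine beats_core hval₀ hcap hxdeg hx0 hmax inv hval₂ ?_
  intro v hv
  rcases Finset.mem_insert.mp hv with rfl | hv
  · rw [mem_satF]
    exact ⟨inv.Hdeg v inv.zmem, by rw [hz1]⟩
  · rw [mem_satF] at hv ⊢
    refine ⟨hv.1, ?_⟩
    by_cases hva : v = a
    · subst hva
      have : inc D' v ≠ 1 := fun hc => hnot ⟨hv.1, hc⟩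
      omega
    · by_cases hvz : v = z
      · subst hvz; rw [hz1]
      · rw [hother v hvz hva]; exact hv.2

lemma fact1 {D' : Finset (Sym2 V)} {z : V} {H : Finset V}
    (h : Reach G Δ D₀ x D' z H) {y : V} (hadj : G.Adj z y)
    (hy : ¬ RS G Δ D₀ x y) : inc D₀ y = cap y := by
  have inv := reach_inv hval₀ hcap hxdeg hx0 hmax h
  have hyH : y ∉ H := fun hmem => hy (reach_of_memH G h y hmem)
  have heq : inc D' y = inc D₀ y := inv.incH y hyH
  by_contra hne
  have hlt : inc D' y < cap y := by
    have := hval₀.2 y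
    omega
  exact add_beats hval₀ hcap hxdeg hx0 hmax inv hadj hlt

lemma fact2 {D' : Finset (Sym2 V)} {z : V} {H : Finset V}
    (h : Reach G Δ D₀ x D' z H) {y a : V} (hadj : G.Adj z y)
    (hy : ¬ RS G Δ D₀ x y) (hea : s(y, a) ∈ D₀) : RS G Δ D₀ x a := by
  have inv := reach_inv hval₀ hcap hxdeg hx0 hmax h
  by_cases heD' : s(y, a) ∈ D'
  · by_cases hstep : G.degree a = Δ ∧ inc D' a = 1
    · exact ⟨_, _, Reach.step y a h hadj heD' hstep.1 hstep.2⟩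
    · exact (swap_beats hval₀ hcap hxdeg hx0 hmax inv hadj heD' hstep).elim
  · obtain ⟨hh, hhH, hhe⟩ := inv.edgeOld _ hea heD'
    rcases Sym2.mem_iff.mp hhe with rfl | rfl
    · exact (hy (reach_of_memH G h _ hhH)).elim
    · exact reach_of_memH G h _ hhH

lemma fact4 (hW : ∀ v w, G.degree v = Δ → G.degree w = Δ →
      cap v = 1 → cap w = 1 → ¬ G.Adj v w)
    {z b : V} (hz : RS G Δ D₀ x z) (hb : RS G Δ D₀ x b)
    (hadj : G.Adj z b) : False := by
  have key : ∀ z' b' : V, RS G Δ D₀ x z' → RS G Δ D₀ x b' → G.Adj z' b' →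
      2 ≤ cap b' → False := by
    intro z' b' hz' hb' hadj' hcapb
    obtain ⟨D', H, h⟩ := hz'
    have inv := reach_inv hval₀ hcap hxdeg hx0 hmax h
    have hble : inc D' b' ≤ 1 := by
      by_cases hbH : b' ∈ H
      · exact inv.incLe b' hbH
      · rw [inv.incH b' hbH]
        obtain ⟨Db, Hb, hbReach⟩ := hb'
        exact (reach_inv hval₀ hcap hxdeg hx0 hmax hbReach).Hinc b'
          (reach_inv hval₀ hcap hxdeg hx0 hmax hbReach).zmem
    exact add_beats hval₀ hcap hxdeg hx0 hmax inv hadj' (by omega)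
  have hdz : G.degree z = Δ := by
    obtain ⟨D', H, h⟩ := hz
    have inv := reach_inv hval₀ hcap hxdeg hx0 hmax h
    exact inv.Hdeg z inv.zmem
  have hdb : G.degree b = Δ := by
    obtain ⟨D', H, h⟩ := hb
    have inv := reach_inv hval₀ hcap hxdeg hx0 hmax h
    exact inv.Hdeg b inv.zmem
  rcases Nat.lt_or_ge (cap b) 2 with hcb | hcb
  · rcases Nat.lt_or_ge (cap z) 2 with hcz | hcz
    · have h1 : cap z = 1 := by have := hcap z; omega
      have h2 : cap b = 1 := by have := hcap b; omega
      exact hW z b hdz hdb h1 h2 hadj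
    · exact key b z hb hz (G.adj_symm hadj) hcz
  · exact key z b hz hb hadj hcb

end Master

/-- **The deletion lemma.** In a graph with max degree at most `Δ`, there is a
valid deletion set hitting every vertex of degree `Δ` at least once, provided
capacities are at least 1 and no two adjacent degree-`Δ` vertices both have
capacity 1. -/
theorem atom {Δ : ℕ} {cap : V → ℕ} (hΔ : 1 ≤ Δ) (hdegle : ∀ v, G.degree v ≤ Δ)
    (hcap : ∀ v, 1 ≤ cap v)
    (hW : ∀ v w, G.degree v = Δ → G.degree w = Δ → cap v = 1 → cap w = 1 → ¬ G.Adj v w) :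
    ∃ D : Finset (Sym2 V), Valid G cap D ∧ ∀ v, G.degree v = Δ → 1 ≤ inc D v := by
  classical
  obtain ⟨D₀, hD₀mem, hmax'⟩ := Finset.exists_max_image
      ((G.edgeFinset.powerset).filter (fun D => Valid G cap D))
      (fun D => (satF G Δ D).card)
      ⟨∅, Finset.mem_filter.mpr ⟨by simp, by simp [Valid, inc]⟩⟩
  have hval₀ : Valid G cap D₀ := (Finset.mem_filter.mp hD₀mem).2
  have hmax : ∀ D, Valid G cap D → (satF G Δ D).card ≤ (satF G Δ D₀).card := by
    intro D hD
    refine hmax' D (Finset.mem_filter.mpr ⟨Finset.mem_powerset.mpr ?_, hD⟩)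
    intro e he; exact SimpleGraph.mem_edgeFinset.mpr (hD.1 e he)
  refine ⟨D₀, hval₀, ?_⟩
  by_contra hcon
  push_neg at hcon
  obtain ⟨x, hxdeg, hxlt⟩ := hcon
  have hx0 : inc D₀ x = 0 := by omega
  -- the two finsets of the counting argument
  set ℛ : Finset V := Finset.univ.filter (RS G Δ D₀ x) with hℛ
  set ℬ : Finset V := Finset.univ.filter
    (fun y => ¬ RS G Δ D₀ x y ∧ ∃ z, RS G Δ D₀ x z ∧ G.Adj z y) with hℬ
  have memℛ : ∀ z, z ∈ ℛ ↔ RS G Δ D₀ x z := by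
    intro z; rw [hℛ]; simp
  have memℬ : ∀ y, y ∈ ℬ ↔
      (¬ RS G Δ D₀ x y ∧ ∃ z, RS G Δ D₀ x z ∧ G.Adj z y) := by
    intro y; rw [hℬ]; simp
  have hRtopinc : ∀ z, RS G Δ D₀ x z → G.degree z = Δ ∧ inc D₀ z ≤ 1 := by
    rintro z ⟨D', H, h⟩
    have inv := reach_inv hval₀ hcap hxdeg hx0 hmax h
    exact ⟨inv.Hdeg z inv.zmem, inv.Hinc z inv.zmem⟩
  have hxRS : RS G Δ D₀ x x := ⟨D₀, _, Reach.base⟩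
  have hxR : x ∈ ℛ := (memℛ x).mpr hxRS
  have hadjB : ∀ z y, RS G Δ D₀ x z → G.Adj z y → y ∈ ℬ := by
    intro z y hz hadj
    have hns : ¬ RS G Δ D₀ x y := fun hy =>
      fact4 hval₀ hcap hxdeg hx0 hmax hW hz hy hadj
    exact (memℬ y).mpr ⟨hns, z, hz, hadj⟩
  have hnbr : ∀ z ∈ ℛ, G.neighborFinset z = ℬ.filter (fun y => G.Adj z y) := by
    intro z hz
    ext y
    simp only [SimpleGraph.mem_neighborFinset, Finset.mem_filter]
    exact ⟨fun h => ⟨hadjB z y ((memℛ z).mp hz) h, h⟩, fun h => h.2⟩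
  have hA : Δ * ℛ.card ≤ Δ * ℬ.card := by
    calc Δ * ℛ.card = ∑ _z ∈ ℛ, Δ := by rw [Finset.sum_const, smul_eq_mul, mul_comm]
      _ = ∑ z ∈ ℛ, G.degree z :=
        Finset.sum_congr rfl (fun z hz => ((hRtopinc z ((memℛ z).mp hz)).1).symm)
      _ = ∑ z ∈ ℛ, (ℬ.filter (fun y => G.Adj z y)).card := by
          refine Finset.sum_congr rfl (fun z hz => ?_)
          rw [← hnbr z hz, SimpleGraph.card_neighborFinset_eq_degree]
      _ = ∑ y ∈ ℬ, (ℛ.filter (fun z => G.Adj z y)).card := by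
          simp only [Finset.card_filter]
          exact Finset.sum_comm
      _ ≤ ∑ y ∈ ℬ, G.degree y := by
          refine Finset.sum_le_sum (fun y _hy => ?_)
          rw [← SimpleGraph.card_neighborFinset_eq_degree]
          refine Finset.card_le_card (fun z hz => ?_)
          rw [SimpleGraph.mem_neighborFinset]
          exact G.adj_symm (Finset.mem_filter.mp hz).2
      _ ≤ ∑ _y ∈ ℬ, Δ := Finset.sum_le_sum (fun y _ => hdegle y)
      _ = Δ * ℬ.card := by rw [Finset.sum_const, smul_eq_mul, mul_comm]
  have hRB : ℛ.card ≤ ℬ.card := Nat.le_of_mul_le_mul_left hA hΔ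
  have hBfull : ∀ y ∈ ℬ, inc D₀ y = cap y := by
    intro y hy
    obtain ⟨hns, z, ⟨D', H, h⟩, hadj⟩ := (memℬ y).mp hy
    exact fact1 hval₀ hcap hxdeg hx0 hmax h hadj hns
  have hBotherRS : ∀ y ∈ ℬ, ∀ a, s(y, a) ∈ D₀ → RS G Δ D₀ x a := by
    intro y hy a hea
    obtain ⟨hns, z, ⟨D', H, h⟩, hadj⟩ := (memℬ y).mp hy
    exact fact2 hval₀ hcap hxdeg hx0 hmax h hadj hns hea
  have hdisj : ∀ y ∈ ℬ, ∀ y' ∈ ℬ, y ≠ y' →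
      Disjoint (D₀.filter (fun e => y ∈ e)) (D₀.filter (fun e => y' ∈ e)) := by
    intro y hy y' hy' hne
    rw [Finset.disjoint_left]
    intro e he he'
    obtain ⟨heD, hye⟩ := Finset.mem_filter.mp he
    obtain ⟨-, hy'e⟩ := Finset.mem_filter.mp he'
    have heq : e = s(y, y') := (Sym2.mem_and_mem_iff hne).mp ⟨hye, hy'e⟩
    subst heq
    exact ((memℬ y').mp hy').1 (hBotherRS y hy y' heD)
  have hchain : ℬ.card ≤ ℛ.card - 1 := by
    calc ℬ.card = ∑ _y ∈ ℬ, 1 := by simp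
      _ ≤ ∑ y ∈ ℬ, inc D₀ y :=
        Finset.sum_le_sum (fun y hy => by rw [hBfull y hy]; exact hcap y)
      _ = (ℬ.biUnion (fun y => D₀.filter (fun e => y ∈ e))).card :=
        (Finset.card_biUnion hdisj).symm
      _ ≤ (ℛ.biUnion (fun z => D₀.filter (fun e => z ∈ e))).card := by
          refine Finset.card_le_card ?_
          intro e he
          obtain ⟨y, hy, hef⟩ := Finset.mem_biUnion.mp he
          obtain ⟨heD, hye⟩ := Finset.mem_filter.mp hef
          obtain ⟨a, rfl⟩ := Sym2.mem_iff_exists.mp hye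
          have hra := hBotherRS y hy a heD
          exact Finset.mem_biUnion.mpr ⟨a, (memℛ a).mpr hra,
            Finset.mem_filter.mpr ⟨heD, Sym2.mem_mk_right _ _⟩⟩
      _ ≤ ∑ z ∈ ℛ, inc D₀ z := Finset.card_biUnion_le
      _ ≤ ℛ.card - 1 := by
          rw [← Finset.add_sum_erase ℛ _ hxR, hx0, zero_add]
          calc ∑ z ∈ ℛ.erase x, inc D₀ z ≤ ∑ _z ∈ ℛ.erase x, 1 :=
              Finset.sum_le_sum (fun z hz =>
                (hRtopinc z ((memℛ z).mp (Finset.mem_of_mem_erase hz))).2)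
            _ = (ℛ.erase x).card := by simp
            _ = ℛ.card - 1 := Finset.card_erase_of_mem hxR
  have hpos : 1 ≤ ℛ.card := Finset.card_pos.mpr ⟨x, hxR⟩
  omega

section Bridge

lemma ndeg_eq_degree (F : SimpleGraph V) [DecidableRel F.Adj] (v : V) :
    ndeg F v = F.degree v := by
  rw [ndeg, Set.ncard_eq_toFinset_card']
  simp [SimpleGraph.degree, SimpleGraph.neighborFinset]

lemma fromEdgeSet_le {G : SimpleGraph V} {D : Finset (Sym2 V)}
    (hD : ∀ e ∈ D, e ∈ G.edgeSet) :
    SimpleGraph.fromEdgeSet (↑D : Set (Sym2 V)) ≤ G := by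
  intro a b hab
  rw [SimpleGraph.fromEdgeSet_adj] at hab
  exact (SimpleGraph.mem_edgeSet G).mp (hD _ hab.1)

lemma ndeg_fromEdgeSet {G : SimpleGraph V} {D : Finset (Sym2 V)}
    (hD : ∀ e ∈ D, e ∈ G.edgeSet) (v : V) :
    ndeg (SimpleGraph.fromEdgeSet (↑D : Set (Sym2 V))) v = inc D v := by
  classical
  have hset : (SimpleGraph.fromEdgeSet (↑D : Set (Sym2 V))).neighborSet v
      = {w | s(v, w) ∈ D} := by
    ext w
    simp only [SimpleGraph.mem_neighborSet, SimpleGraph.fromEdgeSet_adj, Finset.mem_coe,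
      Set.mem_setOf_eq]
    constructor
    · rintro ⟨h1, -⟩; exact h1
    · intro h1
      refine ⟨h1, fun hvw => ?_⟩
      exact G.not_isDiag_of_mem_edgeSet (hD _ h1) (by simp [hvw])
  rw [ndeg, hset,
    show {w | s(v, w) ∈ D} = ↑(Finset.univ.filter (fun w => s(v, w) ∈ D)) from by
      ext w; simp,
    Set.ncard_coe_finset, inc]
  refine Finset.card_bij (fun w _ => s(v, w)) ?_ ?_ ?_
  · intro w hw
    rw [Finset.mem_filter] at hw ⊢
    exact ⟨hw.2, Sym2.mem_mk_left _ _⟩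
  · intro w₁ h₁ w₂ h₂ heq
    exact Sym2.congr_right.mp heq
  · intro e he
    rw [Finset.mem_filter] at he
    obtain ⟨heD, hve⟩ := he
    obtain ⟨b, rfl⟩ := Sym2.mem_iff_exists.mp hve
    exact ⟨b, Finset.mem_filter.mpr ⟨Finset.mem_univ _, heD⟩, rfl⟩

lemma ndeg_sdiff {H K : SimpleGraph V} (h : K ≤ H) (v : V) :
    ndeg (H \ K) v = ndeg H v - ndeg K v := by
  have hsub : K.neighborSet v ⊆ H.neighborSet v := fun w hw => h hw
  have hset : (H \ K).neighborSet v = H.neighborSet v \ K.neighborSet v := by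
    ext w
    simp [SimpleGraph.mem_neighborSet, SimpleGraph.sdiff_adj]
  rw [ndeg, ndeg, ndeg, hset, Set.ncard_diff hsub]

end Bridge

end FactorKey


/-- **Key lemma.** Let `1 ≤ k ≤ r - 1`, let `G` be an `{r, r+1}`-graph, and let
`U` be the set of vertices of degree `r + 1`. If `U` is independent, then `G`
has a `{k, k+1}`-factor `F` with `d_F(u) = k + 1` for every `u ∈ U`. -/
theorem factor_with_U {r k : ℕ} (hk1 : 1 ≤ k) (hkr : k ≤ r - 1)
    {V : Type*} [Fintype V]
    (G : SimpleGraph V) (hdeg : ∀ v, ndeg G v = r ∨ ndeg G v = r + 1)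
    (hU : ∀ u w, ndeg G u = r + 1 → ndeg G w = r + 1 → ¬ G.Adj u w) :
    ∃ F ≤ G, (∀ v, ndeg F v = k ∨ ndeg F v = k + 1) ∧
      (∀ u, ndeg G u = r + 1 → ndeg F u = k + 1) := by
  classical
  have hkr' : k + 1 ≤ r := by omega
  let P : ℕ → Prop := fun s => ∃ H : SimpleGraph V, H ≤ G ∧
      (∀ v, ndeg H v = s ∨ ndeg H v = s + 1) ∧
      (∀ v, ndeg G v = r + 1 → ndeg H v = s + 1)
  have hPr : P r := ⟨G, le_refl G, hdeg, fun v hv => hv⟩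
  have hstep : ∀ s, k ≤ s → P (s + 1) → P s := by
    rintro s hks ⟨H, hHG, hwin, hpin⟩
    haveI : DecidableRel H.Adj := Classical.decRel _
    set cap : V → ℕ := fun v =>
      if ndeg G v = r + 1 then 1 else if ndeg H v = s + 2 then 2 else 1 with hcap'
    have hbr : ∀ v, H.degree v = ndeg H v := fun v => (FactorKey.ndeg_eq_degree H v).symm
    obtain ⟨D, hDval, hDsat⟩ := FactorKey.atom H (Δ := s + 2) (cap := cap)
      (by omega)
      (by intro v; rw [hbr]; rcases hwin v with h | h <;> omega)
      (by intro v; rw [hcap']; dsimp only; split_ifs <;> omega)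
      (by
        intro v w hv hw hcv hcw
        rw [hbr] at hv hw
        have hUv : ndeg G v = r + 1 := by
          by_contra hc
          rw [hcap'] at hcv; simp only [if_neg hc, if_pos hv] at hcv; omega
        have hUw : ndeg G w = r + 1 := by
          by_contra hc
          rw [hcap'] at hcw; simp only [if_neg hc, if_pos hw] at hcw; omega
        intro hadj
        exact hU v w hUv hUw (hHG hadj))
    set Dg : SimpleGraph V := SimpleGraph.fromEdgeSet (↑D : Set (Sym2 V)) with hDg
    have hDgH : Dg ≤ H := FactorKey.fromEdgeSet_le hDval.1
    have hDgdeg : ∀ v, ndeg Dg v = FactorKey.inc D v := fun v =>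
      FactorKey.ndeg_fromEdgeSet hDval.1 v
    refine ⟨H \ Dg, le_trans (sdiff_le) hHG, ?_, ?_⟩
    · intro v
      rw [FactorKey.ndeg_sdiff hDgH, hDgdeg]
      by_cases hUv : ndeg G v = r + 1
      · have h1 : ndeg H v = s + 2 := hpin v hUv
        have h2 : 1 ≤ FactorKey.inc D v := hDsat v (by rw [hbr]; exact h1)
        have h3 : FactorKey.inc D v ≤ 1 := by
          have := hDval.2 v
          rw [hcap'] at this; simp only [if_pos hUv] at this; exact this
        omega
      · by_cases htop : ndeg H v = s + 2
        · have h2 : 1 ≤ FactorKey.inc D v := hDsat v (by rw [hbr]; exact htop)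
          have h3 : FactorKey.inc D v ≤ 2 := by
            have := hDval.2 v
            rw [hcap'] at this; simp only [if_neg hUv, if_pos htop] at this; exact this
          omega
        · have h1 : ndeg H v = s + 1 := by rcases hwin v with h | h; exact h; omega
          have h3 : FactorKey.inc D v ≤ 1 := by
            have := hDval.2 v
            rw [hcap'] at this; simp only [if_neg hUv, if_neg htop] at this; exact this
          omega
    · intro v hUv
      rw [FactorKey.ndeg_sdiff hDgH, hDgdeg]
      have h1 : ndeg H v = s + 2 := hpin v hUv
      have h2 : 1 ≤ FactorKey.inc D v := hDsat v (by rw [hbr]; exact h1)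
      have h3 : FactorKey.inc D v ≤ 1 := by
        have := hDval.2 v
        rw [hcap'] at this; simp only [if_pos hUv] at this; exact this
      omega
  have hP : ∀ j, j ≤ r - k → P (r - j) := by
    intro j
    induction j with
    | zero => intro _; simpa using hPr
    | succ n ih =>
      intro hj
      have h1 : k ≤ r - (n + 1) := by omega
      have h2 : r - n = (r - (n + 1)) + 1 := by omega
      exact hstep (r - (n + 1)) h1 (by rw [← h2]; exact ih (by omega))
  have hPk := hP (r - k) (le_refl _)
  rw [show r - (r - k) = k from by omega] at hPk
  obtain ⟨F, hFG, hFwin, hFpin⟩ := hPk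
  exact ⟨F, hFG, hFwin, hFpin⟩
end

section
/- Let r be even, and let G* be the r-regular graph formed from r disjoint copies J_1, ..., J_r of K_{r+1} minus an edge (with removed edge endpoints a_i, b_i in copy J_i), plus two new vertices u, v, where u is joined to a_1, b_1, ..., a_{r/2-1}, b_{r/2-1}, a_{r-1}, a_r and v is joined to a_{r/2}, b_{r/2}, ..., a_{r-2}, b_{r-2}, b_{r-1}, b_r. Then in any spanning subgraph F of G* in which every vertex has odd degree, the degree of u in F lies in {r/2 - 1, r/2, r/2 + 1}. -/
/-- In copy `i` (0-based), the vertices `a_i` and `b_i` are indexed by `0` and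
`1` respectively.  `adjU r i a` says the vertex `a` of copy `i` is a neighbour
of `u`: `u` is joined to `a_i, b_i` for the copies `1, …, r/2 - 1` (1-based)
and to `a_{r-1}, a_r` (1-based). -/
def adjU (r : ℕ) (i : Fin r) (a : Fin (r + 1)) : Prop :=
  ((i : ℕ) < r / 2 - 1 ∧ ((a : ℕ) = 0 ∨ (a : ℕ) = 1)) ∨
    (((i : ℕ) = r - 2 ∨ (i : ℕ) = r - 1) ∧ (a : ℕ) = 0)

/-- `adjV r i a` says the vertex `a` of copy `i` is a neighbour of `v`: `v` is
joined to `a_i, b_i` for the copies `r/2, …, r-2` (1-based) and to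
`b_{r-1}, b_r` (1-based). -/
def adjV (r : ℕ) (i : Fin r) (a : Fin (r + 1)) : Prop :=
  (r / 2 - 1 ≤ (i : ℕ) ∧ (i : ℕ) ≤ r - 3 ∧ ((a : ℕ) = 0 ∨ (a : ℕ) = 1)) ∨
    (((i : ℕ) = r - 2 ∨ (i : ℕ) = r - 1) ∧ (a : ℕ) = 1)

/-- The adjacency relation of the graph `G*`: it consists of `r` disjoint
copies (indexed by `Fin r`) of `K_{r+1}` minus the edge `a_i b_i` (vertices
`a_i = 0` and `b_i = 1` of each copy), together with two extra vertices
`u = Sum.inr 0` and `v = Sum.inr 1` joined to the copies as prescribed by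
`adjU` and `adjV`. -/
def GstarAdj (r : ℕ) :
    ((Fin r × Fin (r + 1)) ⊕ Fin 2) → ((Fin r × Fin (r + 1)) ⊕ Fin 2) → Prop
  | Sum.inl (i, a), Sum.inl (j, b) =>
      i = j ∧ a ≠ b ∧ ¬(((a : ℕ) = 0 ∧ (b : ℕ) = 1) ∨ ((a : ℕ) = 1 ∧ (b : ℕ) = 0))
  | Sum.inl (i, a), Sum.inr w => if w = 0 then adjU r i a else adjV r i a
  | Sum.inr w, Sum.inl (i, a) => if w = 0 then adjU r i a else adjV r i a
  | Sum.inr _, Sum.inr _ => False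

/-- The graph `G*` of the paper. -/
def Gstar (r : ℕ) : SimpleGraph ((Fin r × Fin (r + 1)) ⊕ Fin 2) where
  Adj := GstarAdj r
  symm := by
    constructor
    rintro (⟨i, a⟩ | w) (⟨j, b⟩ | w') h <;> simp only [GstarAdj] at * <;> tauto
  loopless := by
    constructor
    rintro (⟨i, a⟩ | w) h
    · simp only [GstarAdj] at h; tauto
    · simp only [GstarAdj] at h

open Finset

lemma ndeg_eq_s19 {V : Type*} [Fintype V] (F : SimpleGraph V) (w : V) [DecidableRel F.Adj] :
    ndeg F w = ∑ x : V, if F.Adj w x then 1 else 0 := by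
  rw [ndeg, Set.ncard_eq_toFinset_card']
  have : (F.neighborSet w).toFinset = Finset.univ.filter (F.Adj w) := by
    ext x; simp [SimpleGraph.neighborSet]; exact Set.mem_toFinset
  rw [this, Finset.card_filter]

lemma odd_sum_of_odd {α : Type*} (s : Finset α) (f : α → ℕ) (h1 : Odd s.card)
    (h2 : ∀ a ∈ s, Odd (f a)) : Odd (∑ a ∈ s, f a) := by
  rw [Nat.odd_iff, Finset.sum_nat_mod]
  have h : ∑ a ∈ s, f a % 2 = ∑ a ∈ s, 1 := by
    apply Finset.sum_congr rfl
    intro a ha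
    exact Nat.odd_iff.mp (h2 a ha)
  rw [h, Finset.sum_const, smul_eq_mul, mul_one, ← Nat.odd_iff]
  exact h1

lemma card_filter_lt_fin (r k : ℕ) (h : k ≤ r) :
    (Finset.univ.filter (fun i : Fin r => (i : ℕ) < k)).card = k := by
  have he : Finset.univ.filter (fun i : Fin r => (i : ℕ) < k)
      = Finset.map (Fin.castLEEmb h) Finset.univ := by
    ext i
    simp only [Finset.mem_filter, Finset.mem_univ, true_and, Finset.mem_map]
    constructor
    · intro hi
      exact ⟨⟨(i : ℕ), hi⟩, by ext; simp [Fin.castLEEmb]⟩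
    · rintro ⟨j, rfl⟩
      simp [Fin.castLEEmb]
  rw [he, Finset.card_map, Finset.card_univ, Fintype.card_fin]


/-- In any spanning subgraph `F` of `G*` in which every vertex has odd degree,
the degree of `u = Sum.inr 0` in `F` lies in `{r/2 - 1, r/2, r/2 + 1}`. -/
theorem Gstar_odd_subgraph_degree_u {r : ℕ} (hr : Even r)
    (F : SimpleGraph ((Fin r × Fin (r + 1)) ⊕ Fin 2)) (hF : F ≤ Gstar r)
    (hodd : ∀ w, Odd (ndeg F w)) :
    ndeg F (Sum.inr 0) ∈ ({r / 2 - 1, r / 2, r / 2 + 1} : Set ℕ) := by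
  classical
  have hle : ∀ x y, F.Adj x y → GstarAdj r x y := fun x y h => hF h
  set k := r / 2 - 1 with hk
  set c : Fin r → ℕ :=
    fun i => ∑ a : Fin (r + 1), if F.Adj (Sum.inr 0) (Sum.inl (i, a)) then 1 else 0 with hc
  -- Step A : degree of u is the sum of the c i
  have hA : ndeg F (Sum.inr 0) = ∑ i : Fin r, c i := by
    rw [ndeg_eq_s19, Fintype.sum_sum_type, Fintype.sum_prod_type]
    have h2 : ∀ w : Fin 2, ¬ F.Adj (Sum.inr 0) (Sum.inr w) := fun w h => hle _ _ h
    simp [h2, hc]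
  -- Step B : for i < k, c i = 1
  have hB : ∀ i : Fin r, (i : ℕ) < k → c i = 1 := by
    intro i hi
    have hr2 : 2 ≤ r := by
      obtain ⟨m, hm⟩ := hr
      have := i.isLt
      omega
    -- no edges from v to copy i
    have hd : ∀ a : Fin (r + 1), ¬ F.Adj (Sum.inr 1) (Sum.inl (i, a)) := by
      intro a h
      have h' := hle _ _ h
      simp only [GstarAdj] at h'
      rw [if_neg (by decide : (1 : Fin 2) ≠ 0)] at h'
      rw [adjV] at h'
      rcases h' with ⟨h1, -, -⟩ | ⟨h1 | h1, -⟩ <;> omega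
    -- decomposition of degrees in copy i
    have hdec : ∀ a : Fin (r + 1), ndeg F (Sum.inl (i, a)) =
        (∑ b : Fin (r + 1), if F.Adj (Sum.inl (i, a)) (Sum.inl (i, b)) then 1 else 0)
        + ((if F.Adj (Sum.inl (i, a)) (Sum.inr 0) then 1 else 0)
           + (if F.Adj (Sum.inl (i, a)) (Sum.inr 1) then 1 else 0)) := by
      intro a
      have honly : (∑ j : Fin r, ∑ b : Fin (r + 1),
          if F.Adj (Sum.inl (i, a)) (Sum.inl (j, b)) then 1 else 0)
          = ∑ b : Fin (r + 1), if F.Adj (Sum.inl (i, a)) (Sum.inl (i, b)) then 1 else 0 := by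
        refine Finset.sum_eq_single i (fun j _ hj => ?_) (fun h => absurd (Finset.mem_univ i) h)
        apply Finset.sum_eq_zero
        intro b _
        rw [if_neg]
        intro h
        have h' := hle _ _ h
        simp only [GstarAdj] at h'
        exact hj h'.1.symm
      rw [ndeg_eq_s19, Fintype.sum_sum_type, Fintype.sum_prod_type, honly, Fin.sum_univ_two]
    -- sum of degrees equals even + c i
    have hS : Odd (∑ a : Fin (r + 1), ndeg F (Sum.inl (i, a))) := by
      apply odd_sum_of_odd
      · simp only [Finset.card_univ, Fintype.card_fin]
        obtain ⟨m, hm⟩ := hr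
        exact ⟨m, by omega⟩
      · intro a _; exact hodd _
    have heven : Even (∑ a : Fin (r + 1), ∑ b : Fin (r + 1),
        if F.Adj (Sum.inl (i, a)) (Sum.inl (i, b)) then 1 else 0) := by
      let Gi : SimpleGraph (Fin (r + 1)) :=
        { Adj := fun a b => F.Adj (Sum.inl (i, a)) (Sum.inl (i, b)),
          symm := ⟨fun a b h => F.adj_symm h⟩,
          loopless := ⟨fun a h => F.irrefl h⟩ }
      have hdeg : ∀ a, Gi.degree a =
          ∑ b : Fin (r + 1), if F.Adj (Sum.inl (i, a)) (Sum.inl (i, b)) then 1 else 0 := by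
        intro a
        rw [← SimpleGraph.card_neighborFinset_eq_degree]
        have : Gi.neighborFinset a = Finset.univ.filter (Gi.Adj a) := by
          ext b; simp [SimpleGraph.neighborFinset, SimpleGraph.neighborSet]; exact Set.mem_toFinset
        rw [this, Finset.card_filter]
      have := Gi.sum_degrees_eq_twice_card_edges
      refine ⟨Gi.edgeFinset.card, ?_⟩
      rw [← two_mul, ← this]
      exact (Finset.sum_congr rfl (fun a _ => (hdeg a))).symm
    have hsum : ∑ a : Fin (r + 1), ndeg F (Sum.inl (i, a)) =
        (∑ a : Fin (r + 1), ∑ b : Fin (r + 1),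
          if F.Adj (Sum.inl (i, a)) (Sum.inl (i, b)) then 1 else 0) + c i := by
      rw [Finset.sum_congr rfl (fun a _ => hdec a), Finset.sum_add_distrib,
        Finset.sum_add_distrib]
      have hz : ∑ a : Fin (r + 1),
          (if F.Adj (Sum.inl (i, a)) (Sum.inr 1) then 1 else 0) = 0 := by
        apply Finset.sum_eq_zero
        intro a _
        rw [if_neg (fun h => hd a (F.adj_symm h))]
      have hcc : ∑ a : Fin (r + 1),
          (if F.Adj (Sum.inl (i, a)) (Sum.inr 0) then 1 else 0) = c i := by
        apply Finset.sum_congr rfl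
        intro a _
        congr 1
        · exact propext (SimpleGraph.adj_comm F _ _)
      rw [hz, hcc, add_zero]
    have hoddc : Odd (c i) := by
      rw [hsum] at hS
      rcases heven with ⟨t, ht⟩
      rcases hS with ⟨s, hs⟩
      exact ⟨s - t, by omega⟩
    -- c i ≤ 2
    have hbound : c i ≤ 2 := by
      have hsub : Finset.univ.filter (fun a : Fin (r + 1) =>
          F.Adj (Sum.inr 0) (Sum.inl (i, a))) ⊆ {(0 : Fin (r + 1)), 1} := by
        intro a ha
        simp only [Finset.mem_filter] at ha
        have h' := hle _ _ ha.2
        simp only [GstarAdj, if_pos rfl] at h'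
        rw [adjU] at h'
        have hv : (a : ℕ) = 0 ∨ (a : ℕ) = 1 := by
          rcases h' with ⟨-, h⟩ | ⟨h1 | h1, h⟩
          · exact h
          · omega
          · omega
        simp only [Finset.mem_insert, Finset.mem_singleton]
        rcases hv with hv | hv
        · left; ext; simpa using hv
        · right; ext
          have h1 : ((1 : Fin (r + 1)) : ℕ) = 1 % (r + 1) := rfl
          have h2 : 1 % (r + 1) = 1 := Nat.mod_eq_of_lt (by omega)
          omega
      calc c i = (Finset.univ.filter (fun a : Fin (r + 1) =>
            F.Adj (Sum.inr 0) (Sum.inl (i, a)))).card := (Finset.card_filter _ _).symm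
        _ ≤ ({(0 : Fin (r + 1)), 1} : Finset _).card := Finset.card_le_card hsub
        _ ≤ 2 := Finset.card_insert_le _ _ |>.trans (by simp)
    obtain ⟨t, ht⟩ := hoddc
    omega
  -- r = 0 case
  rcases Nat.eq_zero_or_pos r with hr0 | hrpos
  · subst hr0
    rw [hA]
    have h0 : ∑ i : Fin 0, c i = 0 := by
      rw [Finset.univ_eq_empty, Finset.sum_empty]
    rw [h0]
    left
    rfl
  have hr2 : 2 ≤ r := by obtain ⟨m, hm⟩ := hr; omega
  -- c i = 0 unless i < k or i ≥ r - 2 ;  c i ≤ 1 when i ≥ r - 2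
  have hmid : ∀ i : Fin r, ¬ (i : ℕ) < k → c i ≤ if r - 2 ≤ (i : ℕ) then 1 else 0 := by
    intro i hi
    by_cases hB2 : r - 2 ≤ (i : ℕ)
    · rw [if_pos hB2]
      have hsub : Finset.univ.filter (fun a : Fin (r + 1) =>
          F.Adj (Sum.inr 0) (Sum.inl (i, a))) ⊆ {(0 : Fin (r + 1))} := by
        intro a ha
        simp only [Finset.mem_filter] at ha
        have h' := hle _ _ ha.2
        simp only [GstarAdj, if_pos rfl] at h'
        rw [adjU] at h'
        have hv : (a : ℕ) = 0 := by
          rcases h' with ⟨h1, -⟩ | ⟨-, h⟩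
          · omega
          · exact h
        simp only [Finset.mem_singleton]
        ext; simpa using hv
      calc c i = (Finset.univ.filter (fun a : Fin (r + 1) =>
            F.Adj (Sum.inr 0) (Sum.inl (i, a)))).card := (Finset.card_filter _ _).symm
        _ ≤ ({(0 : Fin (r + 1))} : Finset _).card := Finset.card_le_card hsub
        _ = 1 := Finset.card_singleton _
    · rw [if_neg hB2]
      have : ∀ a : Fin (r + 1), ¬ F.Adj (Sum.inr 0) (Sum.inl (i, a)) := by
        intro a h
        have h' := hle _ _ h
        simp only [GstarAdj, if_pos rfl] at h'
        rw [adjU] at h'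
        rcases h' with ⟨h1, -⟩ | ⟨h1 | h1, -⟩ <;> omega
      have : c i = 0 := Finset.sum_eq_zero (fun a _ => by rw [if_neg (this a)])
      omega
  -- assemble
  have hkr : k ≤ r := by omega
  have hsplit : ∑ i : Fin r, c i =
      ∑ i ∈ Finset.univ.filter (fun i : Fin r => (i : ℕ) < k), c i
      + ∑ i ∈ Finset.univ.filter (fun i : Fin r => ¬ (i : ℕ) < k), c i :=
    (Finset.sum_filter_add_sum_filter_not _ _ _).symm
  have h1 : ∑ i ∈ Finset.univ.filter (fun i : Fin r => (i : ℕ) < k), c i = k := by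
    rw [Finset.sum_congr rfl (fun i hi => hB i (Finset.mem_filter.mp hi).2),
      Finset.sum_const, smul_eq_mul, mul_one, card_filter_lt_fin r k hkr]
  have h2 : ∑ i ∈ Finset.univ.filter (fun i : Fin r => ¬ (i : ℕ) < k), c i ≤ 2 := by
    calc ∑ i ∈ Finset.univ.filter (fun i : Fin r => ¬ (i : ℕ) < k), c i
        ≤ ∑ i ∈ Finset.univ.filter (fun i : Fin r => ¬ (i : ℕ) < k),
            (if r - 2 ≤ (i : ℕ) then 1 else 0) := by
          apply Finset.sum_le_sum
          intro i hi
          exact hmid i (Finset.mem_filter.mp hi).2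
      _ ≤ ∑ i : Fin r, (if r - 2 ≤ (i : ℕ) then 1 else 0) :=
          Finset.sum_le_sum_of_subset (Finset.filter_subset _ _)
      _ = (Finset.univ.filter (fun i : Fin r => r - 2 ≤ (i : ℕ))).card :=
          (Finset.card_filter _ _).symm
      _ ≤ ({(⟨r - 2, by omega⟩ : Fin r), ⟨r - 1, by omega⟩} : Finset (Fin r)).card := by
          apply Finset.card_le_card
          intro i hi
          simp only [Finset.mem_filter] at hi
          have := i.isLt
          simp only [Finset.mem_insert, Finset.mem_singleton]
          rcases Nat.lt_or_ge (i : ℕ) (r - 1) with h | h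
          · left; ext; simp; omega
          · right; ext; simp; omega
      _ ≤ 2 := Finset.card_insert_le _ _ |>.trans (by simp)
  rw [hA, hsplit, h1]
  simp only [Set.mem_insert_iff, Set.mem_singleton_iff]
  omega
end
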